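/- arXiv:1307.4933 — 5 statements merged into one kernel-verified Lean document; each statement's English description precedes it below -/
import Mathlib

section
/- For every finite simple graph Γ, every integer l ≥ 4, and every pair of distinct vertices A, B of Γ, the number of l-cycles satisfies the 4-term relation modulo 2: E_l(Γ) − E_l(Γ′_AB) ≡ E_l(Γ̃_AB) − E_l(Γ̃′_AB) (mod 2). -/
open Finset
open scoped Classical

/-- The cyclic successor of an element of `Fin m`. -/
def cyclicSucc {m : ℕ} (a : Fin m) : Fin m :=
  ⟨((a : ℕ) + 1) % m, Nat.mod_lt _ a.pos⟩

/-- The cyclic predecessor of an element of `Fin m`. -/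
def cyclicPred {m : ℕ} (a : Fin m) : Fin m :=
  ⟨((a : ℕ) + (m - 1)) % m, Nat.mod_lt _ a.pos⟩

/-- `f : Fin l → V` traces an `l`-cycle of `G`: it is injective and cyclically
consecutive vertices are adjacent. -/
def IsCycleMap {V : Type} (G : SimpleGraph V) (l : ℕ) (f : Fin l → V) : Prop :=
  Function.Injective f ∧ ∀ i : Fin l, G.Adj (f i) (f (cyclicSucc i))

/-- The number `E_l(G)` of `l`-cycles of `G`, counted up to rotation and reflection
(each such cycle is traced by exactly `2 * l` maps `Fin l → V`). -/
noncomputable def cycleCount {V : Type} [Fintype V] (G : SimpleGraph V) (l : ℕ) : ℕ :=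
  (Finset.univ.filter (fun f : Fin l → V => IsCycleMap G l f)).card / (2 * l)

/-- `o` is an orientation of `G`: every edge gets exactly one direction. -/
def IsOrientation {V : Type} (G : SimpleGraph V) (o : V → V → Prop) : Prop :=
  ∀ ⦃x y : V⦄, G.Adj x y → (o x y ↔ ¬ o y x)

/-- The sign of a cycle map with respect to a direction relation `o`:
`+1` iff the number of edges agreeing with the traversal is even. -/
noncomputable def cycleSign {V : Type} {l : ℕ} (o : V → V → Prop) (f : Fin l → V) : ℤ :=
  (-1) ^ (Finset.univ.filter (fun i : Fin l => o (f i) (f (cyclicSucc i)))).card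

/-- The sum of signs of all `l`-cycles of `G` (counted up to rotation and
reflection) with respect to the direction relation `o`. -/
noncomputable def signedCycleSum {V : Type} [Fintype V] (G : SimpleGraph V)
    (o : V → V → Prop) (l : ℕ) : ℤ :=
  (∑ f ∈ Finset.univ.filter (fun f : Fin l → V => IsCycleMap G l f),
    cycleSign o f) / (2 * (l : ℤ))

/-- The graph `Γ'_AB`: toggle the adjacency between the vertices `A` and `B`. -/
def toggleEdge {V : Type} (G : SimpleGraph V) (A B : V) : SimpleGraph V where
  Adj x y := x ≠ y ∧ (G.Adj x y ↔ ¬((x = A ∧ y = B) ∨ (x = B ∧ y = A)))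
  symm := by
    constructor
    intro x y h
    obtain ⟨h1, h2⟩ := h
    refine ⟨h1.symm, ?_⟩
    rw [G.adj_comm]
    tauto
  loopless := ⟨fun x h => h.1 rfl⟩

/-- The graph `Γ̃_AB`: toggle the adjacency between `A` and every vertex
`C ∉ {A, B}` adjacent to `B` in `Γ`. -/
def tildeGraph {V : Type} (G : SimpleGraph V) (A B : V) : SimpleGraph V where
  Adj x y := x ≠ y ∧
    (G.Adj x y ↔ ¬((x = A ∧ y ≠ B ∧ G.Adj y B) ∨ (y = A ∧ x ≠ B ∧ G.Adj x B)))
  symm := by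
    constructor
    intro x y h
    obtain ⟨h1, h2⟩ := h
    refine ⟨h1.symm, ?_⟩
    rw [G.adj_comm]
    tauto
  loopless := ⟨fun x h => h.1 rfl⟩

/-- A chord diagram of order `n`: a partition of the `2 * n` cyclically ordered
points `0, 1, …, 2n - 1` into `n` two-element blocks (chords), here recorded by
the function assigning to each point its chord. -/
structure ChordDiagram (n : ℕ) where
  chord : Fin (2 * n) → Fin n
  fiber_two : ∀ i : Fin n, (Finset.univ.filter (fun x => chord x = i)).card = 2

namespace ChordDiagram

variable {n : ℕ}

/-- The pair of endpoints of the chord `i`. -/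
def endpoints (d : ChordDiagram n) (i : Fin n) : Finset (Fin (2 * n)) :=
  Finset.univ.filter (fun x => d.chord x = i)

lemma endpoints_nonempty (d : ChordDiagram n) (i : Fin n) : (d.endpoints i).Nonempty := by
  rw [← Finset.card_pos, endpoints, d.fiber_two]
  norm_num

/-- The smaller endpoint of the chord `i`. -/
def lo (d : ChordDiagram n) (i : Fin n) : Fin (2 * n) :=
  (d.endpoints i).min' (d.endpoints_nonempty i)

/-- The larger endpoint of the chord `i`. -/
def hi (d : ChordDiagram n) (i : Fin n) : Fin (2 * n) :=
  (d.endpoints i).max' (d.endpoints_nonempty i)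

/-- Chords `i` and `j` cross: exactly one endpoint of `j` lies strictly between
the two endpoints of `i`. -/
def Crosses (d : ChordDiagram n) (i j : Fin n) : Prop :=
  Xor' (d.lo i < d.lo j ∧ d.lo j < d.hi i) (d.lo i < d.hi j ∧ d.hi j < d.hi i)

/-- The intersection graph `γ(d)` of the chord diagram `d`. -/
def interGraph (d : ChordDiagram n) : SimpleGraph (Fin n) where
  Adj i j := i ≠ j ∧ (d.Crosses i j ∨ d.Crosses j i)
  symm := ⟨fun i j h => ⟨h.1.symm, h.2.symm⟩⟩
  loopless := ⟨fun i h => h.1 rfl⟩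

lemma chord_lo (d : ChordDiagram n) (i : Fin n) : d.chord (d.lo i) = i := by
  have h := (d.endpoints i).min'_mem (d.endpoints_nonempty i)
  exact (Finset.mem_filter.mp h).2

/-- An orientation of a chord diagram: a choice of a beginning point for each
chord (the other endpoint being its end). -/
def Orientation (d : ChordDiagram n) : Type :=
  { b : Fin n → Fin (2 * n) // ∀ i, d.chord (b i) = i }

/-- The end of the chord `i`, i.e. its endpoint other than the beginning. -/
def endOf (d : ChordDiagram n) (o : d.Orientation) (i : Fin n) : Fin (2 * n) :=
  if o.1 i = d.lo i then d.hi i else d.lo i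

/-- The point `z` lies on the arc going in the positive direction from `a` to `b`. -/
def InArc {m : ℕ} (a b z : Fin m) : Prop :=
  if a < b then a < z ∧ z < b else a < z ∨ z < b

/-- The direction induced by an orientation of the chords on the edges of the
intersection graph: the edge between `i` and `j` is directed from `i` to `j`
iff the beginning of `j` lies on the arc going in the positive direction from
the beginning of `i` to the end of `i`. -/
def dir (d : ChordDiagram n) (o : d.Orientation) (i j : Fin n) : Prop :=
  InArc (o.1 i) (d.endOf o i) (o.1 j)

/-- The canonical orientation: every chord begins at its smaller endpoint. -/
def canonical (d : ChordDiagram n) : d.Orientation :=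
  ⟨d.lo, d.chord_lo⟩

end ChordDiagram

/-- The weight system `R_k`: the sum of the signs of the `2k`-cycles of the
directed intersection graph (for the canonical orientation of the chords). -/
noncomputable def Rk (k : ℕ) {n : ℕ} (d : ChordDiagram n) : ℤ :=
  signedCycleSum d.interGraph (d.dir d.canonical) (2 * k)

/-- When the point at position `p` is moved to position `q` (keeping the relative
order of all the other points), `moveFun p q r` is the old position of the point
occupying the position `r` after the move. -/
def moveFun {m : ℕ} (p q : Fin m) (r : Fin m) : Fin m :=
  if r = q then p
  else if h : (p : ℕ) ≤ (r : ℕ) ∧ (r : ℕ) < (q : ℕ) then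
    ⟨(r : ℕ) + 1, by have := q.isLt; omega⟩
  else if h' : (q : ℕ) < (r : ℕ) ∧ (r : ℕ) ≤ (p : ℕ) then
    ⟨(r : ℕ) - 1, by have := r.isLt; omega⟩
  else r

/-- The invariant `w_C`: `1` if the adjacency matrix of the graph over `ZMod 2`
is nondegenerate, `0` otherwise. -/
noncomputable def wC {V : Type} [Fintype V] (G : SimpleGraph V) : ℤ :=
  if (G.adjMatrix (ZMod 2)).det ≠ 0 then 1 else 0

/-- All set partitions of `Fin n` into nonempty blocks. -/
noncomputable def finPartitions (n : ℕ) : Finset (Finset (Finset (Fin n))) :=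
  Finset.univ.filter (fun P =>
    (∀ s ∈ P, s.Nonempty) ∧ ∀ x : Fin n, ∃! s, s ∈ P ∧ x ∈ s)

/-- A `4`-invariant of finite simple graphs: an integer-valued, isomorphism
invariant function satisfying the `4`-term relation for graphs. -/
structure FourInvariant where
  val : ∀ n : ℕ, SimpleGraph (Fin n) → ℤ
  iso_invariant : ∀ {n m : ℕ} (G : SimpleGraph (Fin n)) (H : SimpleGraph (Fin m)),
    Nonempty (G ≃g H) → val n G = val m H
  four_term : ∀ (n : ℕ) (G : SimpleGraph (Fin n)) (A B : Fin n), A ≠ B →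
    val n G - val n (toggleEdge G A B) =
      val n (tildeGraph G A B) - val n (toggleEdge (tildeGraph G A B) A B)

/-- The `5`-wheel: a `5`-cycle on the vertices `0, …, 4` together with the hub `5`
adjacent to all five cycle vertices. -/
def wheel5 : SimpleGraph (Fin 6) :=
  SimpleGraph.fromRel (fun x y =>
    ((x : ℕ) = 5 ∧ (y : ℕ) < 5) ∨
    ((x : ℕ) < 5 ∧ (y : ℕ) < 5 ∧ (y : ℕ) = ((x : ℕ) + 1) % 5))

/-- The triangular prism: two triangles `{0, 1, 2}` and `{3, 4, 5}` joined by the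
perfect matching `i — i + 3`. -/
def prism : SimpleGraph (Fin 6) :=
  SimpleGraph.fromRel (fun x y =>
    ((x : ℕ) < 3 ∧ (y : ℕ) < 3 ∧ x ≠ y) ∨
    (3 ≤ (x : ℕ) ∧ 3 ≤ (y : ℕ) ∧ x ≠ y) ∨
    ((y : ℕ) = (x : ℕ) + 3))

set_option linter.unusedSectionVars false
set_option maxHeartbeats 1000000

section FourTermAux

variable {V : Type} [Fintype V] {l : ℕ}

lemma cyclicSucc_eq_add_one [NeZero l] (i : Fin l) : cyclicSucc i = i + 1 := by
  cases l with
  | zero => exact absurd rfl (NeZero.ne 0)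
  | succ n =>
    apply Fin.ext
    simp [cyclicSucc, Fin.add_def, Nat.add_mod_right]

lemma cyclicSucc_val (i : Fin l) :
    (cyclicSucc i : ℕ) = if (i : ℕ) + 1 = l then 0 else (i : ℕ) + 1 := by
  have hi := i.isLt
  simp only [cyclicSucc]
  split_ifs with h
  · simp [h]
  · exact Nat.mod_eq_of_lt (by omega)

lemma fin_val_one [NeZero l] (hl : 4 ≤ l) : ((1 : Fin l) : ℕ) = 1 :=
  (Fin.val_one' l).trans (Nat.mod_eq_of_lt (by omega))

variable {G : SimpleGraph V} {A B : V}

lemma IsCycleMap.comp_add [NeZero l] {f : Fin l → V} (hf : IsCycleMap G l f) (c : Fin l) :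
    IsCycleMap G l (fun j => f (j + c)) := by
  refine ⟨hf.1.comp (add_left_injective c), fun i => ?_⟩
  simpa [cyclicSucc_eq_add_one, add_right_comm] using hf.2 (i + c)

lemma IsCycleMap.comp_sub [NeZero l] {f : Fin l → V} (hf : IsCycleMap G l f) (c : Fin l) :
    IsCycleMap G l (fun j => f (c - j)) := by
  refine ⟨hf.1.comp (fun a b h => sub_right_injective h), fun i => ?_⟩
  have h2 := (hf.2 (c - (i + 1))).symm
  have e : c - (i + 1) + 1 = c - i := by rw [sub_add_eq_sub_sub, sub_add_cancel]
  simp only [cyclicSucc_eq_add_one] at h2 ⊢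
  rw [e] at h2
  exact h2

/-- The set of "based paths": injective maps starting `A, B, …` whose edges other than
the initial one (from position `0` to position `1`) are all edges of `G`. -/
noncomputable def baseSet (G : SimpleGraph V) (A B : V) (l : ℕ) [NeZero l] : Finset (Fin l → V) :=
  Finset.univ.filter (fun f : Fin l → V => Function.Injective f ∧ f 0 = A ∧ f 1 = B ∧
    ∀ i : Fin l, i ≠ 0 → G.Adj (f i) (f (cyclicSucc i)))

lemma toggleEdge_adj_of_ne {x y : V}
    (hpair : ¬((x = A ∧ y = B) ∨ (x = B ∧ y = A))) :
    (toggleEdge G A B).Adj x y ↔ G.Adj x y := by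
  constructor
  · rintro ⟨h1, h2⟩
    exact h2.mpr hpair
  · intro h
    exact ⟨h.ne, iff_of_true h hpair⟩

lemma toggle_toggle (G : SimpleGraph V) (A B : V) :
    toggleEdge (toggleEdge G A B) A B = G := by
  ext x y
  by_cases hxy : x = y
  · subst hxy; simp [toggleEdge]
  · by_cases hp : (x = A ∧ y = B) ∨ (x = B ∧ y = A)
    · simp only [toggleEdge]
      tauto
    · simp only [toggleEdge]
      tauto

lemma toggleEdge_adj_AB (hAB : A ≠ B) (h : ¬ G.Adj A B) : (toggleEdge G A B).Adj A B := by
  exact ⟨hAB, by simp [h]⟩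

lemma tildeGraph_adj_AB (hAB : A ≠ B) : (tildeGraph G A B).Adj A B ↔ G.Adj A B := by
  constructor
  · rintro ⟨h1, h2⟩
    rw [h2]
    simp [hAB, Ne.symm hAB]
  · intro h
    exact ⟨hAB, iff_of_true h (by simp [hAB, Ne.symm hAB])⟩

lemma tildeGraph_adj_of_ne {x y : V} (hx : x ≠ A) (hy : y ≠ A) :
    (tildeGraph G A B).Adj x y ↔ G.Adj x y := by
  constructor
  · rintro ⟨h1, h2⟩
    rw [h2]
    simp [hx, hy]
  · intro h
    exact ⟨h.ne, iff_of_true h (by simp [hx, hy])⟩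

lemma tildeGraph_adj_A {c : V} (hc : c ≠ A) (hcB : c ≠ B) :
    (tildeGraph G A B).Adj c A ↔ (G.Adj c A ↔ ¬ G.Adj c B) := by
  constructor
  · rintro ⟨h1, h2⟩
    rw [h2]
    simp [hc, hcB]
  · intro h
    refine ⟨hc, ?_⟩
    simp [hc, hcB]
    exact h

end FourTermAux

section Counting

variable {V : Type} [Fintype V] {l : ℕ} {G : SimpleGraph V} {A B : V}

lemma isCycleMap_of_baseSet [NeZero l] (hadj : G.Adj A B) {f : Fin l → V}
    (hf : f ∈ baseSet G A B l) : IsCycleMap G l f := by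
  simp only [baseSet, mem_filter, mem_univ, true_and] at hf
  obtain ⟨hinj, h0, h1, he⟩ := hf
  refine ⟨hinj, fun i => ?_⟩
  by_cases hi : i = 0
  · subst hi
    have hs : cyclicSucc (0 : Fin l) = 1 := by
      rw [cyclicSucc_eq_add_one, zero_add]
    rw [hs, h0, h1]
    exact hadj
  · exact he i hi

lemma card_cycleMaps_split [NeZero l] (hl : 4 ≤ l) (hAB : A ≠ B) (hadj : G.Adj A B) :
    (Finset.univ.filter (fun f : Fin l → V => IsCycleMap G l f)).card
      = (Finset.univ.filter (fun f : Fin l → V => IsCycleMap (toggleEdge G A B) l f)).card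
        + 2 * l * (baseSet G A B l).card := by
  haveI : NeZero l := ⟨by omega⟩
  classical
  set uses : (Fin l → V) → Prop := fun f =>
    ∃ i : Fin l, (f i = A ∧ f (cyclicSucc i) = B) ∨ (f i = B ∧ f (cyclicSucc i) = A) with huses
  -- The toggled graph's cycle maps are exactly the cycle maps of G avoiding the pair A,B.
  have h1 : (Finset.univ.filter (fun f : Fin l → V => IsCycleMap (toggleEdge G A B) l f))
      = (Finset.univ.filter (fun f : Fin l → V => IsCycleMap G l f ∧ ¬ uses f)) := by
    ext f
    simp only [mem_filter, mem_univ, true_and, huses]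
    constructor
    · rintro ⟨hinj, he⟩
      have hne : ∀ i : Fin l,
          ¬((f i = A ∧ f (cyclicSucc i) = B) ∨ (f i = B ∧ f (cyclicSucc i) = A)) := by
        intro i hcase
        have h := he i
        rcases hcase with ⟨hx, hy⟩ | ⟨hx, hy⟩ <;>
        · rw [hx, hy] at h
          obtain ⟨-, h2⟩ := h
          have := h2.mp ?_
          · tauto
          · rcases h2 with _; tauto
      refine ⟨⟨hinj, fun i => ?_⟩, fun ⟨i, hi⟩ => hne i hi⟩
      exact (toggleEdge_adj_of_ne (hne i)).mp (he i)
    · rintro ⟨⟨hinj, he⟩, hnu⟩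
      have hnu' : ∀ i : Fin l,
          ¬((f i = A ∧ f (cyclicSucc i) = B) ∨ (f i = B ∧ f (cyclicSucc i) = A)) :=
        fun i h => hnu ⟨i, h⟩
      exact ⟨hinj, fun i => (toggleEdge_adj_of_ne (hnu' i)).mpr (he i)⟩
  -- Split the cycle maps of G according to whether they use the pair A,B.
  have h2 := Finset.card_filter_add_card_filter_not
    (s := Finset.univ.filter (fun f : Fin l → V => IsCycleMap G l f)) (p := uses)
  rw [Finset.filter_filter, Finset.filter_filter] at h2
  set U : Finset (Fin l → V) :=
    Finset.univ.filter (fun f : Fin l → V => IsCycleMap G l f ∧ uses f) with hU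
  -- Decompose U as a disjoint union over starting position and direction.
  set Usub : Fin l × Bool → Finset (Fin l → V) := fun p =>
    Finset.univ.filter (fun f : Fin l → V => IsCycleMap G l f ∧
      f p.1 = (cond p.2 B A) ∧ f (cyclicSucc p.1) = (cond p.2 A B)) with hUsub
  have hUeq : U = Finset.univ.biUnion Usub := by
    ext f
    constructor
    · intro hf
      rw [hU, mem_filter] at hf
      simp only [huses] at hf
      obtain ⟨-, hc, i, hcase⟩ := hf
      rw [mem_biUnion]
      rcases hcase with ⟨hx, hy⟩ | ⟨hx, hy⟩
      · exact ⟨(i, false), mem_univ _, by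
          rw [hUsub]; exact mem_filter.mpr ⟨mem_univ _, hc, hx, hy⟩⟩
      · exact ⟨(i, true), mem_univ _, by
          rw [hUsub]; exact mem_filter.mpr ⟨mem_univ _, hc, hx, hy⟩⟩
    · intro hf
      rw [mem_biUnion] at hf
      obtain ⟨⟨i, b⟩, -, hfp⟩ := hf
      rw [hUsub, mem_filter] at hfp
      obtain ⟨-, hc, hx, hy⟩ := hfp
      dsimp only at hx hy
      rw [hU, mem_filter]
      simp only [huses]
      refine ⟨mem_univ _, hc, i, ?_⟩
      cases b
      · exact Or.inl ⟨hx, hy⟩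
      · exact Or.inr ⟨hx, hy⟩
  have hsucc_ne : ∀ i : Fin l, cyclicSucc (cyclicSucc i) ≠ i := by
    intro i h
    have h1 := cyclicSucc_val (cyclicSucc i)
    have h2 := cyclicSucc_val i
    have hi := i.isLt
    rw [h] at h1
    split_ifs at h1 h2 <;> omega
  have hdisj : ∀ p ∈ (Finset.univ : Finset (Fin l × Bool)), ∀ q ∈ Finset.univ, p ≠ q →
      Disjoint (Usub p) (Usub q) := by
    rintro ⟨i, b⟩ - ⟨j, c⟩ - hpq
    rw [Finset.disjoint_left]
    intro f hfp hfq
    simp only [hUsub, mem_filter, mem_univ, true_and] at hfp hfq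
    obtain ⟨⟨hinj, -⟩, hp1, hp2⟩ := hfp
    obtain ⟨-, hq1, hq2⟩ := hfq
    cases b <;> cases c <;> simp only [cond] at hp1 hp2 hq1 hq2
    · exact hpq (by rw [hinj (hp1.trans hq1.symm)])
    · -- b = false, c = true : f i = A, f i⁺ = B, f j = B, f j⁺ = A
      have e1 : i = cyclicSucc j := hinj (hp1.trans hq2.symm)
      have e2 : cyclicSucc i = j := hinj (hp2.trans hq1.symm)
      rw [← e2] at e1
      exact hsucc_ne i e1.symm
    · have e1 : j = cyclicSucc i := hinj (hq1.trans hp2.symm)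
      have e2 : cyclicSucc j = i := hinj (hq2.trans hp1.symm)
      rw [← e2] at e1
      exact hsucc_ne j e1.symm
    · exact hpq (by rw [hinj (hp1.trans hq1.symm)])
  have hcardsub : ∀ p : Fin l × Bool, (Usub p).card = (baseSet G A B l).card := by
    rintro ⟨i, b⟩
    set ρ : Fin l → Fin l := fun j => cond b ((i + 1) - j) (j - i) with hρ
    set ρ' : Fin l → Fin l := fun j => cond b ((i + 1) - j) (j + i) with hρ'
    have hρρ' : ∀ x, ρ (ρ' x) = x := by
      intro x; cases b <;> simp [hρ, hρ']
    have hρ'ρ : ∀ x, ρ' (ρ x) = x := by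
      intro x; cases b <;> simp [hρ, hρ']
    apply Finset.card_bij' (i := fun f _ => f ∘ ρ') (j := fun g _ => g ∘ ρ)
    · -- Usub p → baseSet
      intro f hf
      simp only [hUsub, mem_filter, mem_univ, true_and] at hf
      obtain ⟨hc, hx, hy⟩ := hf
      have hcm : IsCycleMap G l (f ∘ ρ') := by
        cases b
        · exact hc.comp_add i
        · exact hc.comp_sub (i + 1)
      simp only [baseSet, mem_filter, mem_univ, true_and]
      refine ⟨hcm.1, ?_, ?_, fun k _ => hcm.2 k⟩
      · cases b <;> simp only [Function.comp, hρ', cond] at *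
        · rw [zero_add]; exact hx
        · rw [sub_zero]; rw [cyclicSucc_eq_add_one] at hy; exact hy
      · cases b <;> simp only [Function.comp, hρ', cond] at *
        · rw [add_comm, ← cyclicSucc_eq_add_one]; exact hy
        · rw [add_sub_cancel_right]; exact hx
    · -- baseSet → Usub p
      intro g hg
      have hcmG : IsCycleMap G l g := isCycleMap_of_baseSet hadj hg
      simp only [baseSet, mem_filter, mem_univ, true_and] at hg
      obtain ⟨hinj, h0, h1, he⟩ := hg
      have hcm : IsCycleMap G l (g ∘ ρ) := by
        cases b
        · have := hcmG.comp_add (-i)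
          have e : (fun j : Fin l => g (j + -i)) = g ∘ ρ := by
            funext j; simp [hρ, sub_eq_add_neg]
          rwa [e] at this
        · exact hcmG.comp_sub (i + 1)
      simp only [hUsub, mem_filter, mem_univ, true_and]
      refine ⟨hcm, ?_, ?_⟩
      · cases b <;> simp only [Function.comp, hρ, cond]
        · rw [sub_self]; exact h0
        · rw [add_sub_cancel_left]; exact h1
      · cases b <;> simp only [Function.comp, hρ, cond] <;>
          rw [cyclicSucc_eq_add_one]
        · rw [add_sub_cancel_left]; exact h1
        · rw [sub_self]; exact h0
    · intro f hf
      funext x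
      exact congrArg f (hρ'ρ x)
    · intro g hg
      funext x
      exact congrArg g (hρρ' x)
  have hUcard : U.card = 2 * l * (baseSet G A B l).card := by
    rw [hUeq, Finset.card_biUnion hdisj]
    rw [Finset.sum_congr rfl (fun p _ => hcardsub p), Finset.sum_const, smul_eq_mul,
      Finset.card_univ, Fintype.card_prod, Fintype.card_fin, Fintype.card_bool]
    ring
  rw [h1]
  omega

end Counting

section Parity

variable {V : Type} [Fintype V] {l : ℕ} {G : SimpleGraph V} {A B : V}

lemma fin_val_zero [NeZero l] : ((0 : Fin l) : ℕ) = 0 :=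
  (Fin.val_zero l)

lemma fin_ne_zero_iff [NeZero l] {i : Fin l} : i ≠ 0 ↔ (i : ℕ) ≠ 0 := by
  rw [Ne, Ne, Fin.ext_iff, fin_val_zero]

lemma cyclicSucc_mk_val (k : ℕ) (hk : k < l) :
    ((cyclicSucc (⟨k, hk⟩ : Fin l)) : ℕ) = if k + 1 = l then 0 else k + 1 :=
  cyclicSucc_val _

lemma baseSet_toggle [NeZero l] (hl : 4 ≤ l) (hAB : A ≠ B) :
    baseSet (toggleEdge G A B) A B l = baseSet G A B l := by
  ext f
  simp only [baseSet, mem_filter, mem_univ, true_and]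
  have key : Function.Injective f → f 0 = A → f 1 = B →
      ∀ i : Fin l, i ≠ 0 →
        ¬((f i = A ∧ f (cyclicSucc i) = B) ∨ (f i = B ∧ f (cyclicSucc i) = A)) := by
    intro hinj h0 h1 i hi0
    rintro (⟨hx, hy⟩ | ⟨hx, hy⟩)
    · exact hi0 (hinj (hx.trans h0.symm))
    · have e1 : i = 1 := hinj (hx.trans h1.symm)
      have e2 : cyclicSucc i = 0 := hinj (hy.trans h0.symm)
      rw [e1] at e2
      have hv := cyclicSucc_val (1 : Fin l)
      rw [e2, fin_val_zero, fin_val_one hl] at hv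
      split_ifs at hv <;> omega
  constructor
  · rintro ⟨hinj, h0, h1, he⟩
    exact ⟨hinj, h0, h1, fun i hi =>
      (toggleEdge_adj_of_ne (key hinj h0 h1 i hi)).mp (he i hi)⟩
  · rintro ⟨hinj, h0, h1, he⟩
    exact ⟨hinj, h0, h1, fun i hi =>
      (toggleEdge_adj_of_ne (key hinj h0 h1 i hi)).mpr (he i hi)⟩

/-- The index `l - 1`. -/
def lastF (l : ℕ) [NeZero l] : Fin l := ⟨l - 1, Nat.sub_lt (NeZero.pos l) one_pos⟩

lemma lastF_ne_zero (hl : 4 ≤ l) [NeZero l] : lastF l ≠ 0 :=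
  fin_ne_zero_iff.mpr (by simp only [lastF]; omega)

lemma cyclicSucc_lastF [NeZero l] : cyclicSucc (lastF l) = 0 := by
  apply Fin.ext
  rw [fin_val_zero]
  have := cyclicSucc_mk_val (l - 1) (Nat.sub_lt (NeZero.pos l) one_pos)
  have hpos := NeZero.pos l
  rw [show (lastF l) = ⟨l - 1, Nat.sub_lt (NeZero.pos l) one_pos⟩ from rfl, this,
    if_pos (by omega)]

/-- The predicate describing "all of `f`'s conditions except the last edge". -/
def QPred (G : SimpleGraph V) (A B : V) (l : ℕ) [NeZero l] (f : Fin l → V) : Prop :=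
  Function.Injective f ∧ f 0 = A ∧ f 1 = B ∧
    ∀ i : Fin l, i ≠ 0 → ((i : ℕ) ≠ l - 1) → G.Adj (f i) (f (cyclicSucc i))

lemma baseSet_eq_filter [NeZero l] (hl : 4 ≤ l) :
    baseSet G A B l
      = Finset.univ.filter (fun f : Fin l → V => QPred G A B l f ∧ G.Adj (f (lastF l)) A) := by
  ext f
  simp only [baseSet, mem_filter, mem_univ, true_and]
  simp only [QPred]
  constructor
  · rintro ⟨hinj, h0, h1, he⟩
    refine ⟨⟨hinj, h0, h1, fun i hi _ => he i hi⟩, ?_⟩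
    have := he (lastF l) (lastF_ne_zero hl)
    rwa [cyclicSucc_lastF, h0] at this
  · rintro ⟨⟨hinj, h0, h1, he⟩, hA⟩
    refine ⟨hinj, h0, h1, fun i hi => ?_⟩
    by_cases hil : (i : ℕ) = l - 1
    · have hi' : i = lastF l := Fin.ext hil
      rw [hi', cyclicSucc_lastF, h0]
      exact hA
    · exact he i hi hil

lemma baseSet_tilde_eq_filter [NeZero l] (hl : 4 ≤ l) :
    baseSet (tildeGraph G A B) A B l
      = Finset.univ.filter (fun f : Fin l → V =>
          QPred G A B l f ∧ (tildeGraph G A B).Adj (f (lastF l)) A) := by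
  have interior : ∀ f : Fin l → V, Function.Injective f → f 0 = A →
      ∀ i : Fin l, i ≠ 0 → (i : ℕ) ≠ l - 1 →
        ((tildeGraph G A B).Adj (f i) (f (cyclicSucc i)) ↔ G.Adj (f i) (f (cyclicSucc i))) := by
    intro f hinj h0 i hi hil
    apply tildeGraph_adj_of_ne
    · exact fun h => hi (hinj (h.trans h0.symm))
    · intro h
      have e : cyclicSucc i = 0 := hinj (h.trans h0.symm)
      have hv := cyclicSucc_val i
      have hiv := i.isLt
      have hi0 : (i : ℕ) ≠ 0 := fin_ne_zero_iff.mp hi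
      rw [e, fin_val_zero] at hv
      split_ifs at hv <;> omega
  ext f
  simp only [baseSet, mem_filter, mem_univ, true_and]
  simp only [QPred]
  constructor
  · rintro ⟨hinj, h0, h1, he⟩
    refine ⟨⟨hinj, h0, h1, fun i hi hil =>
      (interior f hinj h0 i hi hil).mp (he i hi)⟩, ?_⟩
    have := he (lastF l) (lastF_ne_zero hl)
    rwa [cyclicSucc_lastF, h0] at this
  · rintro ⟨⟨hinj, h0, h1, he⟩, hA⟩
    refine ⟨hinj, h0, h1, fun i hi => ?_⟩
    by_cases hil : (i : ℕ) = l - 1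
    · have hi' : i = lastF l := Fin.ext hil
      rw [hi', cyclicSucc_lastF, h0]
      exact hA
    · exact (interior f hinj h0 i hi hil).mpr (he i hi hil)

/-- Reversal of the path keeping positions `0` and `1` in place. -/
def revMap {l : ℕ} (j : Fin l) : Fin l :=
  if h : (j : ℕ) ≤ 1 then j else ⟨l + 1 - (j : ℕ), by have := j.isLt; omega⟩

lemma revMap_val {l : ℕ} (j : Fin l) :
    (revMap j : ℕ) = if (j : ℕ) ≤ 1 then (j : ℕ) else l + 1 - (j : ℕ) := by
  rw [revMap]
  split_ifs <;> rfl

lemma revMap_mk_val {l : ℕ} (k : ℕ) (hk : k < l) :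
    ((revMap (⟨k, hk⟩ : Fin l)) : ℕ) = if k ≤ 1 then k else l + 1 - k :=
  revMap_val _

lemma revMap_invol {l : ℕ} : Function.Involutive (revMap : Fin l → Fin l) := by
  intro j
  apply Fin.ext
  have h1 := revMap_val j
  have h2 := revMap_val (revMap j)
  have := j.isLt
  split_ifs at h1 h2 <;> omega

lemma QPred_lastF_ne [NeZero l] (hl : 4 ≤ l) {f : Fin l → V} (hf : QPred G A B l f) :
    f (lastF l) ≠ A ∧ f (lastF l) ≠ B := by
  obtain ⟨hinj, h0, h1, -⟩ := hf
  constructor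
  · intro h
    have : lastF l = 0 := hinj (h.trans h0.symm)
    have := congrArg Fin.val this
    rw [fin_val_zero] at this
    simp only [lastF] at this
    omega
  · intro h
    have : lastF l = 1 := hinj (h.trans h1.symm)
    have := congrArg Fin.val this
    rw [fin_val_one hl] at this
    simp only [lastF] at this
    omega

lemma TClosed [NeZero l] (hl : 4 ≤ l) {f : Fin l → V}
    (hf : QPred G A B l f ∧ G.Adj (f (lastF l)) B) :
    QPred G A B l (f ∘ revMap) ∧ G.Adj ((f ∘ revMap) (lastF l)) B := by
  obtain ⟨⟨hinj, h0, h1, he⟩, hlast⟩ := hf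
  have hrev0 : revMap (0 : Fin l) = 0 := by
    apply Fin.ext
    rw [revMap_val, if_pos (by rw [fin_val_zero]; omega)]
  have hrev1 : revMap (1 : Fin l) = 1 := by
    apply Fin.ext
    rw [revMap_val, if_pos (by rw [fin_val_one hl])]
  have hrevlast : revMap (lastF l) = ⟨2, by omega⟩ := by
    apply Fin.ext
    show (revMap (lastF l) : ℕ) = 2
    have h' : (revMap (lastF l) : ℕ) = if l - 1 ≤ 1 then l - 1 else l + 1 - (l - 1) :=
      revMap_val _
    rw [h', if_neg (by omega)]
    omega
  have hsucc1 : cyclicSucc (1 : Fin l) = ⟨2, by omega⟩ := by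
    apply Fin.ext
    show ((cyclicSucc (1 : Fin l)) : ℕ) = 2
    rw [cyclicSucc_val, fin_val_one hl, if_neg (by omega)]
  have hedge1 : G.Adj B (f ⟨2, by omega⟩) := by
    have h1ne0 : (1 : Fin l) ≠ 0 := fin_ne_zero_iff.mpr (by rw [fin_val_one hl]; omega)
    have := he 1 h1ne0 (by rw [fin_val_one hl]; omega)
    rwa [hsucc1, h1] at this
  refine ⟨⟨hinj.comp revMap_invol.injective, ?_, ?_, ?_⟩, ?_⟩
  · show f (revMap 0) = A
    rw [hrev0]; exact h0
  · show f (revMap 1) = B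
    rw [hrev1]; exact h1
  · intro i hi0 hil
    have hiv := i.isLt
    have hk1 : 1 ≤ (i : ℕ) := Nat.one_le_iff_ne_zero.mpr (fin_ne_zero_iff.mp hi0)
    have hk2 : (i : ℕ) ≤ l - 2 := by omega
    have hsucc : cyclicSucc i = ⟨(i : ℕ) + 1, by omega⟩ := by
      apply Fin.ext
      show ((cyclicSucc i) : ℕ) = (i : ℕ) + 1
      rw [cyclicSucc_val, if_neg (by omega)]
    show G.Adj (f (revMap i)) (f (revMap (cyclicSucc i)))
    by_cases hk : (i : ℕ) = 1
    · have hi1 : i = 1 := Fin.ext (by rw [fin_val_one hl]; exact hk)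
      have hrevi : revMap i = i := by
        apply Fin.ext
        rw [revMap_val, if_pos (by omega)]
      have hrevs : revMap (cyclicSucc i) = lastF l := by
        apply Fin.ext
        rw [hsucc]
        have h' : ((revMap (⟨(i : ℕ) + 1, by omega⟩ : Fin l)) : ℕ)
            = if (i : ℕ) + 1 ≤ 1 then (i : ℕ) + 1 else l + 1 - ((i : ℕ) + 1) :=
          revMap_val _
        rw [h', if_neg (by omega)]
        show l + 1 - ((i : ℕ) + 1) = l - 1
        omega
      rw [hrevi, hrevs, hi1, h1]
      exact hlast.symm
    · have hklb : 2 ≤ (i : ℕ) := by omega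
      have hb1 : l - (i : ℕ) < l := by omega
      have hb2 : l + 1 - (i : ℕ) < l := by omega
      have hj0 : (⟨l - (i : ℕ), hb1⟩ : Fin l) ≠ 0 :=
        fin_ne_zero_iff.mpr (show l - (i : ℕ) ≠ 0 by omega)
      have hjl : ((⟨l - (i : ℕ), hb1⟩ : Fin l) : ℕ) ≠ l - 1 := show l - (i : ℕ) ≠ l - 1 by omega
      have hadjj := he ⟨l - (i : ℕ), hb1⟩ hj0 hjl
      have hsj : cyclicSucc (⟨l - (i : ℕ), hb1⟩ : Fin l) = ⟨l + 1 - (i : ℕ), hb2⟩ := by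
        apply Fin.ext
        show ((cyclicSucc (⟨l - (i : ℕ), hb1⟩ : Fin l)) : ℕ) = l + 1 - (i : ℕ)
        rw [cyclicSucc_mk_val, if_neg (by omega)]
        omega
      rw [hsj] at hadjj
      have e1 : revMap i = ⟨l + 1 - (i : ℕ), hb2⟩ := by
        apply Fin.ext
        show (revMap i : ℕ) = l + 1 - (i : ℕ)
        rw [revMap_val, if_neg (by omega)]
      have e2 : revMap (cyclicSucc i) = ⟨l - (i : ℕ), hb1⟩ := by
        apply Fin.ext
        rw [hsucc]
        have h' : ((revMap (⟨(i : ℕ) + 1, by omega⟩ : Fin l)) : ℕ)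
            = if (i : ℕ) + 1 ≤ 1 then (i : ℕ) + 1 else l + 1 - ((i : ℕ) + 1) :=
          revMap_val _
        rw [h', if_neg (by omega)]
        show l + 1 - ((i : ℕ) + 1) = l - (i : ℕ)
        omega
      rw [e1, e2]
      exact hadjj.symm
  · show G.Adj (f (revMap (lastF l))) B
    rw [hrevlast]
    exact hedge1.symm

lemma baseSet_tilde_parity [NeZero l] (hl : 4 ≤ l) (hAB : A ≠ B) :
    (baseSet G A B l).card % 2 = (baseSet (tildeGraph G A B) A B l).card % 2 := by
  classical
  set S := baseSet G A B l with hS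
  set S' := baseSet (tildeGraph G A B) A B l with hS'
  set T : Finset (Fin l → V) :=
    Finset.univ.filter (fun f : Fin l → V => QPred G A B l f ∧ G.Adj (f (lastF l)) B) with hT
  have hsym : (S \ S') ∪ (S' \ S) = T := by
    ext f
    rw [mem_union, mem_sdiff, mem_sdiff, hS, hS', hT,
      baseSet_eq_filter hl, baseSet_tilde_eq_filter hl,
      mem_filter, mem_filter, mem_filter]
    simp only [mem_univ, true_and]
    by_cases hQ : QPred G A B l f
    · obtain ⟨hcA, hcB⟩ := QPred_lastF_ne hl hQ
      have htA := tildeGraph_adj_A (G := G) (B := B) hcA hcB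
      simp only [hQ, true_and]
      rw [htA]
      by_cases hP : G.Adj (f (lastF l)) A <;> by_cases hR : G.Adj (f (lastF l)) B <;>
        simp [hP, hR]
    · simp [hQ]
  have heven : 2 ∣ T.card := by
    have hzero : ((T.card : ZMod 2)) = 0 := by
      have hsum : ∑ _f ∈ T, (1 : ZMod 2) = (T.card : ZMod 2) := by simp
      rw [← hsum]
      apply Finset.sum_involution (g := fun f _ => f ∘ revMap)
      · intro a ha; decide
      · intro a ha _
        intro hfix
        have haT : QPred G A B l a ∧ G.Adj (a (lastF l)) B := by
          rw [hT, mem_filter] at ha; exact ha.2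
        have hinj := haT.1.1
        have h2l : ((⟨2, by omega⟩ : Fin l)) = revMap (⟨2, by omega⟩ : Fin l) := by
          have := congrFun hfix (⟨2, by omega⟩ : Fin l)
          exact (hinj this).symm
        have hv := congrArg Fin.val h2l
        rw [revMap_mk_val, if_neg (by omega)] at hv
        have hv' : (2 : ℕ) = l + 1 - 2 := hv
        omega
      · intro a ha
        rw [hT, mem_filter] at ha ⊢
        exact ⟨mem_univ _, TClosed hl ha.2⟩
      · intro a ha
        funext x
        exact congrArg a (revMap_invol x)
    exact (ZMod.natCast_eq_zero_iff _ 2).mp hzero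
  have e1 := Finset.card_inter_add_card_sdiff S S'
  have e2 := Finset.card_inter_add_card_sdiff S' S
  have e3 : S' ∩ S = S ∩ S' := Finset.inter_comm _ _
  rw [e3] at e2
  have e4 := Finset.card_union_add_card_inter (S \ S') (S' \ S)
  have e5 : (S \ S') ∩ (S' \ S) = ∅ := by
    rw [Finset.eq_empty_iff_forall_notMem]
    intro x hx
    rw [mem_inter, mem_sdiff, mem_sdiff] at hx
    tauto
  rw [hsym, e5] at e4
  simp only [Finset.card_empty] at e4
  omega

end Parity

section Assembly

variable {V : Type} [Fintype V] {l : ℕ} {G : SimpleGraph V} {A B : V}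

lemma cycleCount_add [NeZero l] (hl : 4 ≤ l) (hAB : A ≠ B) (hadj : G.Adj A B) :
    cycleCount G l = cycleCount (toggleEdge G A B) l + (baseSet G A B l).card := by
  unfold cycleCount
  rw [card_cycleMaps_split hl hAB hadj]
  exact Nat.add_mul_div_left _ _ (by omega)

end Assembly

theorem cycleCount_fourTerm_mod_two {V : Type} [Fintype V] (G : SimpleGraph V)
    (l : ℕ) (hl : 4 ≤ l) (A B : V) (hAB : A ≠ B) :
    (cycleCount G l : ℤ) - (cycleCount (toggleEdge G A B) l : ℤ) ≡
      (cycleCount (tildeGraph G A B) l : ℤ) -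
        (cycleCount (toggleEdge (tildeGraph G A B) A B) l : ℤ) [ZMOD 2] := by
  haveI : NeZero l := ⟨by omega⟩
  have hpar : (baseSet G A B l).card % 2 = (baseSet (tildeGraph G A B) A B l).card % 2 :=
    baseSet_tilde_parity hl hAB
  unfold Int.ModEq
  by_cases hadj : G.Adj A B
  · have h1 := cycleCount_add hl hAB hadj
    have h2 := cycleCount_add hl hAB ((tildeGraph_adj_AB hAB).mpr hadj)
    omega
  · have hadj' : (toggleEdge G A B).Adj A B := toggleEdge_adj_AB hAB hadj
    have h1 := cycleCount_add hl hAB hadj'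
    rw [toggle_toggle, baseSet_toggle hl hAB] at h1
    have hadjt : ¬ (tildeGraph G A B).Adj A B := fun h => hadj ((tildeGraph_adj_AB hAB).mp h)
    have hadj'' : (toggleEdge (tildeGraph G A B) A B).Adj A B := toggleEdge_adj_AB hAB hadjt
    have h2 := cycleCount_add hl hAB hadj''
    rw [toggle_toggle, baseSet_toggle hl hAB] at h2
    omega
end

section
/- Let Γ be a finite simple graph, let A and B be adjacent vertices of Γ, and let l ≥ 4. Then the number of l-cycles of Γ passing through the edge AB such that the neighbor C of A along the cycle (C ≠ B) is adjacent to B in Γ and the neighbor D of B along the cycle (D ≠ A) is adjacent to A in Γ, is even. -/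
open Finset
open scoped Classical

-- AUX START
open Fin.CommRing

section EvenCyclesAux

variable {l : ℕ} [NeZero l]

/-- The reflection of `Fin l` fixing `0` and `1`. -/
def auxRho (j : Fin l) : Fin l := if j = 0 ∨ j = 1 then j else 1 - j

lemma aux_val_one (hl : 4 ≤ l) : (1 : Fin l).val = 1 := by
  show 1 % l = 1; exact Nat.mod_eq_of_lt (by omega)

lemma aux_val_two (hl : 4 ≤ l) : ((1 : Fin l) + 1).val = 2 := by
  rw [Fin.add_def, aux_val_one hl]; exact Nat.mod_eq_of_lt (by omega)

lemma aux_val_three (hl : 4 ≤ l) : ((1 : Fin l) + 1 + 1).val = 3 := by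
  rw [Fin.add_def, aux_val_two hl, aux_val_one hl]
  exact Nat.mod_eq_of_lt (by omega)

lemma aux_one_ne_zero (hl : 4 ≤ l) : (1 : Fin l) ≠ 0 := by
  intro h; have := congrArg Fin.val h; rw [aux_val_one hl] at this; simp at this

lemma aux_two_ne_zero (hl : 4 ≤ l) : ((1 : Fin l) + 1) ≠ 0 := by
  intro h; have := congrArg Fin.val h; rw [aux_val_two hl] at this; simp at this

lemma aux_two_ne_one (hl : 4 ≤ l) : ((1 : Fin l) + 1) ≠ 1 := by
  intro h; have := congrArg Fin.val h
  rw [aux_val_two hl, aux_val_one hl] at this; omega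

lemma aux_three_ne_zero (hl : 4 ≤ l) : ((1 : Fin l) + 1 + 1) ≠ 0 := by
  intro h; have := congrArg Fin.val h; rw [aux_val_three hl] at this; simp at this

lemma aux_neg_one_ne_zero (hl : 4 ≤ l) : (-1 : Fin l) ≠ 0 := by
  intro h; exact aux_one_ne_zero hl (neg_eq_zero.mp h)

lemma aux_neg_one_ne_one (hl : 4 ≤ l) : (-1 : Fin l) ≠ 1 := by
  intro h
  apply aux_two_ne_zero hl
  have : (0 : Fin l) = 1 + 1 := by rw [← neg_add_cancel (1 : Fin l), h]
  exact this.symm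

lemma aux_two_ne_neg_one (hl : 4 ≤ l) : ((1 : Fin l) + 1) ≠ -1 := by
  intro h
  apply aux_three_ne_zero hl
  rw [h]; simp

lemma auxRho_zero : auxRho (0 : Fin l) = 0 := by simp [auxRho]

lemma auxRho_one : auxRho (1 : Fin l) = 1 := by simp [auxRho]

lemma auxRho_two (hl : 4 ≤ l) : auxRho ((1 : Fin l) + 1) = -1 := by
  rw [auxRho, if_neg (by push_neg; exact ⟨aux_two_ne_zero hl, aux_two_ne_one hl⟩)]
  ring

lemma auxRho_neg_one (hl : 4 ≤ l) : auxRho (-1 : Fin l) = 1 + 1 := by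
  rw [auxRho, if_neg (by push_neg; exact ⟨aux_neg_one_ne_zero hl, aux_neg_one_ne_one hl⟩)]
  ring

lemma auxRho_invol (j : Fin l) : auxRho (auxRho j) = j := by
  by_cases h : j = 0 ∨ j = 1
  · have hj : auxRho j = j := if_pos h
    rw [hj, hj]
  · push_neg at h
    have h1 : auxRho j = 1 - j := if_neg (by push_neg; exact h)
    have h2 : ¬((1 : Fin l) - j = 0 ∨ (1 : Fin l) - j = 1) := by
      push_neg
      constructor
      · intro h0; exact h.2 (sub_eq_zero.mp h0).symm
      · intro h0; exact h.1 (sub_right_injective (show (1 : Fin l) - j = 1 - 0 by simpa using h0))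
    rw [h1, auxRho, if_neg h2]; ring

lemma auxRho_injective : Function.Injective (auxRho (l := l)) :=
  Function.LeftInverse.injective auxRho_invol

lemma aux_cyclicSucc (hl : 4 ≤ l) (i : Fin l) : cyclicSucc i = i + 1 := by
  apply Fin.ext; rw [Fin.add_def, aux_val_one hl]; rfl

lemma aux_cyclicPred (hl : 4 ≤ l) (i : Fin l) : cyclicPred i = i - 1 := by
  apply Fin.ext; rw [Fin.sub_def, aux_val_one hl]
  show (i.val + (l - 1)) % l = _
  ring_nf

end EvenCyclesAux

section EvenCyclesCore

variable {V : Type} {G : SimpleGraph V} {l : ℕ} [NeZero l]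

lemma aux_flip_isCycleMap (hl : 4 ≤ l) (f : Fin l → V) (hf : IsCycleMap G l f)
    (hCB : G.Adj (f (-1)) (f 1)) (hDA : G.Adj (f (1 + 1)) (f 0)) :
    IsCycleMap G l (f ∘ auxRho) := by
  constructor
  · exact hf.1.comp auxRho_injective
  · intro j
    rw [aux_cyclicSucc hl]
    show G.Adj (f (auxRho j)) (f (auxRho (j + 1)))
    by_cases hj0 : j = 0
    · subst hj0
      rw [zero_add, auxRho_zero, auxRho_one]
      have h := hf.2 0
      rwa [aux_cyclicSucc hl, zero_add] at h
    by_cases hj1 : j = 1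
    · subst hj1
      rw [auxRho_one, auxRho_two hl]
      exact hCB.symm
    by_cases hjm : j = -1
    · subst hjm
      rw [neg_add_cancel, auxRho_zero, auxRho_neg_one hl]
      exact hDA
    · have e1 : auxRho j = 1 - j := if_neg (by push_neg; exact ⟨hj0, hj1⟩)
      have e2 : auxRho (j + 1) = 1 - (j + 1) := by
        apply if_neg
        push_neg
        constructor
        · intro h; exact hjm (by rw [eq_neg_of_add_eq_zero_left h])
        · intro h; exact hj0 (by rwa [add_eq_right] at h)
      rw [e1, e2]
      have h := hf.2 (-j)
      rw [aux_cyclicSucc hl] at h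
      have e3 : (1 : Fin l) - j = -j + 1 := by ring
      have e4 : (1 : Fin l) - (j + 1) = -j := by ring
      rw [e3, e4]
      exact h.symm

lemma aux_shift_isCycleMap (hl : 4 ≤ l) (f : Fin l → V) (hf : IsCycleMap G l f) (t : Fin l) :
    IsCycleMap G l (fun j => f (j - t)) := by
  constructor
  · exact hf.1.comp (sub_left_injective)
  · intro j
    rw [aux_cyclicSucc hl]
    show G.Adj (f (j - t)) (f (j + 1 - t))
    have h := hf.2 (j - t)
    rw [aux_cyclicSucc hl] at h
    have : j - t + 1 = j + 1 - t := by ring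
    rwa [this] at h

end EvenCyclesCore

section EvenCyclesMain

variable {V : Type} {G : SimpleGraph V} {A B : V} {l : ℕ} [NeZero l]

/-- The property defining the normalized set `T`. -/
abbrev auxQ (G : SimpleGraph V) (A B : V) (r : V → ℕ) (l : ℕ) [NeZero l]
    (f : Fin l → V) : Prop :=
  IsCycleMap G l f ∧ f 0 = A ∧ f 1 = B ∧ G.Adj (f (-1)) B ∧ G.Adj (f (1 + 1)) A ∧
    r (f (1 + 1)) < r (f (-1))

/-- The base map: either `f` or its flip. -/
def auxBase (b : Bool) (f : Fin l → V) : Fin l → V :=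
  if b then f ∘ auxRho else f

/-- The unfolding map. -/
def auxPsi (l : ℕ) [NeZero l] (p : Fin l × Bool × (Fin l → V)) : Fin l → V :=
  fun j => auxBase p.2.1 p.2.2 (j - p.1)

lemma aux_flip_props (hl : 4 ≤ l) (f : Fin l → V) (hfc : IsCycleMap G l f)
    (hf0 : f 0 = A) (hf1 : f 1 = B) (hfC : G.Adj (f (-1)) B) (hfD : G.Adj (f (1 + 1)) A) :
    IsCycleMap G l (f ∘ auxRho) ∧ (f ∘ auxRho) 0 = A ∧ (f ∘ auxRho) 1 = B ∧
      G.Adj ((f ∘ auxRho) (-1)) B ∧ G.Adj ((f ∘ auxRho) (1 + 1)) A ∧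
      (f ∘ auxRho) (-1) = f (1 + 1) ∧ (f ∘ auxRho) (1 + 1) = f (-1) := by
  have hv1 : (f ∘ auxRho) (-1) = f (1 + 1) := by
    show f (auxRho (-1)) = _; rw [auxRho_neg_one hl]
  have hv2 : (f ∘ auxRho) (1 + 1) = f (-1) := by
    show f (auxRho (1 + 1)) = _; rw [auxRho_two hl]
  refine ⟨aux_flip_isCycleMap hl f hfc (hf1 ▸ hfC) (hf0 ▸ hfD), ?_, ?_, ?_, ?_, hv1, hv2⟩
  · show f (auxRho 0) = A; rw [auxRho_zero]; exact hf0
  · show f (auxRho 1) = B; rw [auxRho_one]; exact hf1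
  · rw [hv1]
    have h := hfc.2 1
    rw [aux_cyclicSucc hl, hf1] at h
    exact h.symm
  · rw [hv2]
    have h := hfc.2 (-1)
    rw [aux_cyclicSucc hl, neg_add_cancel, hf0] at h
    exact h

lemma aux_base_props (hl : 4 ≤ l) (r : V → ℕ) (b : Bool) (f : Fin l → V)
    (hf : auxQ G A B r l f) :
    IsCycleMap G l (auxBase b f) ∧ (auxBase b f) 0 = A ∧ (auxBase b f) 1 = B ∧
      G.Adj ((auxBase b f) (-1)) B ∧ G.Adj ((auxBase b f) (1 + 1)) A := by
  obtain ⟨hfc, hf0, hf1, hfC, hfD, -⟩ := hf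
  cases b
  · exact ⟨hfc, hf0, hf1, hfC, hfD⟩
  · have h := aux_flip_props hl f hfc hf0 hf1 hfC hfD
    exact ⟨h.1, h.2.1, h.2.2.1, h.2.2.2.1, h.2.2.2.2.1⟩

end EvenCyclesMain

theorem even_cycles_through_edge_first_class {V : Type} [Fintype V]
    (G : SimpleGraph V) (A B : V) (hAB : G.Adj A B) (l : ℕ) (hl : 4 ≤ l) :
    2 * l ∣ (Finset.univ.filter (fun f : Fin l → V =>
      IsCycleMap G l f ∧ ∃ i : Fin l, f i = A ∧ f (cyclicSucc i) = B ∧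
        G.Adj (f (cyclicPred i)) B ∧ G.Adj (f (cyclicSucc (cyclicSucc i))) A)).card := by
  haveI : NeZero l := ⟨by omega⟩
  classical
  obtain ⟨r, hrinj⟩ : ∃ r : V → ℕ, Function.Injective r :=
    ⟨fun v => ((Fintype.equivFin V) v : ℕ),
      fun a b h => (Fintype.equivFin V).injective (Fin.ext h)⟩
  set T : Finset (Fin l → V) := Finset.univ.filter (auxQ G A B r l) with hTdef
  have hbase_inj : ∀ (b : Bool) (f : Fin l → V), Function.Injective f →
      Function.Injective (auxBase b f) := by
    intro b f hf
    cases b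
    · exact hf
    · exact hf.comp auxRho_injective
  -- the forward map lands in the target set
  have hmem : ∀ p ∈ (Finset.univ ×ˢ Finset.univ ×ˢ T :
        Finset (Fin l × Bool × (Fin l → V))),
      auxPsi l p ∈ Finset.univ.filter (fun f : Fin l → V =>
        IsCycleMap G l f ∧ ∃ i : Fin l, f i = A ∧ f (cyclicSucc i) = B ∧
          G.Adj (f (cyclicPred i)) B ∧ G.Adj (f (cyclicSucc (cyclicSucc i))) A) := by
    rintro ⟨t, b, f⟩ hp
    simp only [Finset.mem_product, Finset.mem_univ, true_and, hTdef,
      Finset.mem_filter] at hp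
    obtain ⟨hbc, hb0, hb1, hbC, hbD⟩ := aux_base_props hl r b f hp
    rw [Finset.mem_filter]
    refine ⟨Finset.mem_univ _, ?_, t, ?_, ?_, ?_, ?_⟩
    · exact aux_shift_isCycleMap hl _ hbc t
    · show auxBase b f (t - t) = A
      rwa [sub_self]
    · show auxBase b f (cyclicSucc t - t) = B
      rw [aux_cyclicSucc hl]
      have : t + 1 - t = 1 := by ring
      rwa [this]
    · show G.Adj (auxBase b f (cyclicPred t - t)) B
      rw [aux_cyclicPred hl]
      have : t - 1 - t = -1 := by ring
      rwa [this]
    · show G.Adj (auxBase b f (cyclicSucc (cyclicSucc t) - t)) A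
      rw [aux_cyclicSucc hl, aux_cyclicSucc hl]
      have : t + 1 + 1 - t = 1 + 1 := by ring
      rwa [this]
  -- injectivity
  have hinj : ∀ p₁ ∈ (Finset.univ ×ˢ Finset.univ ×ˢ T :
        Finset (Fin l × Bool × (Fin l → V))),
      ∀ p₂ ∈ (Finset.univ ×ˢ Finset.univ ×ˢ T :
        Finset (Fin l × Bool × (Fin l → V))),
      auxPsi l p₁ = auxPsi l p₂ → p₁ = p₂ := by
    rintro ⟨t, b, f⟩ hp ⟨t', b', f'⟩ hp' heq
    simp only [Finset.mem_product, Finset.mem_univ, true_and, hTdef,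
      Finset.mem_filter] at hp hp'
    obtain ⟨hbc, hb0, hb1, hbC, hbD⟩ := aux_base_props hl r b f hp
    obtain ⟨hbc', hb0', hb1', hbC', hbD'⟩ := aux_base_props hl r b' f' hp'
    -- t = t'
    have htt : t = t' := by
      have h1 : auxBase b f (t - t) = auxBase b' f' (t - t') := congrFun heq t
      rw [sub_self, hb0] at h1
      have h2 : auxBase b' f' (t - t') = auxBase b' f' 0 := by rw [hb0', ← h1]
      have := hbc'.1 h2
      rwa [sub_eq_zero] at this
    subst htt
    have hbb : auxBase b f = auxBase b' f' := by
      funext j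
      have h1 : auxBase b f (j + t - t) = auxBase b' f' (j + t - t) := congrFun heq (j + t)
      rwa [add_sub_cancel_right] at h1
    have hcontra : ∀ g g' : Fin l → V, auxQ G A B r l g → auxQ G A B r l g' →
        g = g' ∘ auxRho → False := by
      intro g g' hg hg' hgg
      have e1 : g (1 + 1) = g' (-1) := by rw [hgg]; show g' (auxRho (1+1)) = _; rw [auxRho_two hl]
      have e2 : g (-1) = g' (1 + 1) := by rw [hgg]; show g' (auxRho (-1)) = _; rw [auxRho_neg_one hl]
      have := hg.2.2.2.2.2
      rw [e1, e2] at this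
      exact absurd hg'.2.2.2.2.2 (not_lt_of_gt this)
    cases b <;> cases b'
    · rw [show auxBase false f = f from rfl, show auxBase false f' = f' from rfl] at hbb
      rw [hbb]
    · exfalso
      exact hcontra f f' hp hp' hbb
    · exfalso
      exact hcontra f' f hp' hp hbb.symm
    · have : f = f' := by
        funext j
        have := congrFun hbb (auxRho j)
        show f j = f' j
        calc f j = (f ∘ auxRho) (auxRho j) := by rw [Function.comp_apply, auxRho_invol]
        _ = (f' ∘ auxRho) (auxRho j) := this
        _ = f' j := by rw [Function.comp_apply, auxRho_invol]
      rw [this]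
  -- surjectivity
  have hsurj : ∀ g ∈ Finset.univ.filter (fun f : Fin l → V =>
        IsCycleMap G l f ∧ ∃ i : Fin l, f i = A ∧ f (cyclicSucc i) = B ∧
          G.Adj (f (cyclicPred i)) B ∧ G.Adj (f (cyclicSucc (cyclicSucc i))) A),
      ∃ p, ∃ hp : p ∈ (Finset.univ ×ˢ Finset.univ ×ˢ T :
        Finset (Fin l × Bool × (Fin l → V))), auxPsi l p = g := by
    intro g hg
    rw [Finset.mem_filter] at hg
    obtain ⟨-, hgc, i, hiA, hiB, hiC, hiD⟩ := hg
    rw [aux_cyclicSucc hl] at hiB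
    rw [aux_cyclicPred hl] at hiC
    rw [aux_cyclicSucc hl, aux_cyclicSucc hl] at hiD
    set f₀ : Fin l → V := fun j => g (j + i) with hf₀def
    have hf₀eq : f₀ = fun j => g (j - (-i)) := by
      funext j; rw [hf₀def]; simp [sub_neg_eq_add]
    have hf₀c : IsCycleMap G l f₀ := by
      rw [hf₀eq]; exact aux_shift_isCycleMap hl g hgc (-i)
    have hf₀0 : f₀ 0 = A := by rw [hf₀def]; simpa using hiA
    have hf₀1 : f₀ 1 = B := by rw [hf₀def]; show g (1 + i) = B; rwa [add_comm]
    have hf₀C : G.Adj (f₀ (-1)) B := by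
      rw [hf₀def]; show G.Adj (g (-1 + i)) B
      have : -1 + i = i - 1 := by ring
      rwa [this]
    have hf₀D : G.Adj (f₀ (1 + 1)) A := by
      rw [hf₀def]; show G.Adj (g (1 + 1 + i)) A
      have : 1 + 1 + i = i + 1 + 1 := by ring
      rwa [this]
    by_cases hlt : r (f₀ (1 + 1)) < r (f₀ (-1))
    · refine ⟨(i, false, f₀), ?_, ?_⟩
      · simp only [Finset.mem_product, Finset.mem_univ, true_and, hTdef, Finset.mem_filter]
        exact ⟨hf₀c, hf₀0, hf₀1, hf₀C, hf₀D, hlt⟩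
      · funext j
        show f₀ (j - i) = g j
        rw [hf₀def]
        simp [sub_add_cancel]
    · have hne : f₀ (1 + 1) ≠ f₀ (-1) := fun h =>
        aux_two_ne_neg_one hl (hf₀c.1 h)
      have hlt' : r (f₀ (-1)) < r (f₀ (1 + 1)) := by
        rcases lt_or_eq_of_le (not_lt.mp hlt) with h | h
        · exact h
        · exact absurd (hrinj h.symm) hne
      obtain ⟨hfc1, hf10, hf11, hf1C, hf1D, hv1, hv2⟩ :=
        aux_flip_props hl f₀ hf₀c hf₀0 hf₀1 hf₀C hf₀D
      refine ⟨(i, true, f₀ ∘ auxRho), ?_, ?_⟩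
      · simp only [Finset.mem_product, Finset.mem_univ, true_and, hTdef, Finset.mem_filter]
        refine ⟨hfc1, hf10, hf11, hf1C, hf1D, ?_⟩
        rw [hv1, hv2]
        exact hlt'
      · funext j
        show ((f₀ ∘ auxRho) ∘ auxRho) (j - i) = g j
        rw [Function.comp_apply, Function.comp_apply, auxRho_invol]
        rw [hf₀def]
        simp [sub_add_cancel]
  have hcard := Finset.card_bij (fun p _ => auxPsi l p) hmem hinj hsurj
  rw [← hcard]
  rw [Finset.card_product, Finset.card_product, Finset.card_univ, Finset.card_univ,
    Fintype.card_fin, Fintype.card_bool]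
  exact ⟨T.card, by ring⟩
end

section
/- Let Γ be a finite simple graph with an orientation o, let S be a subset of the vertices, and let o′ be the orientation obtained from o by reversing the direction of every edge having exactly one endpoint in S (all other edges unchanged). Then every cycle of even length in Γ has the same sign with respect to o as with respect to o′. -/
open Finset
open scoped Classical

lemma cyclicSucc_injective {m : ℕ} : Function.Injective (cyclicSucc (m := m)) := by
  intro a b h
  have ha := a.isLt
  have hb := b.isLt
  have h' : ((a : ℕ) + 1) % m = ((b : ℕ) + 1) % m := congrArg Fin.val h
  have ha' : ((a : ℕ) + 1) % m = if (a : ℕ) + 1 = m then 0 else (a : ℕ) + 1 := by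
    split
    · simp_all
    · exact Nat.mod_eq_of_lt (by omega)
  have hb' : ((b : ℕ) + 1) % m = if (b : ℕ) + 1 = m then 0 else (b : ℕ) + 1 := by
    split
    · simp_all
    · exact Nat.mod_eq_of_lt (by omega)
  rw [ha', hb'] at h'
  apply Fin.ext
  split at h' <;> split at h' <;> omega

lemma neg_one_pow_eq_of_cast_eq {a b : ℕ} (h : (a : ZMod 2) = (b : ZMod 2)) :
    ((-1 : ℤ)) ^ a = (-1) ^ b := by
  have hmod : a % 2 = b % 2 := (ZMod.natCast_eq_natCast_iff a b 2).mp h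
  rcases Nat.even_or_odd a with ha | ha
  · have hb : Even b := by rw [Nat.even_iff] at ha ⊢; omega
    rw [ha.neg_one_pow, hb.neg_one_pow]
  · have hb : Odd b := by rw [Nat.odd_iff] at ha ⊢; omega
    rw [ha.neg_one_pow, hb.neg_one_pow]

theorem cycleSign_eq_of_flip_across_set {V : Type} (G : SimpleGraph V)
    (o o' : V → V → Prop) (ho : IsOrientation G o) (ho' : IsOrientation G o')
    (S : Set V)
    (hflip : ∀ x y, G.Adj x y → Xor' (x ∈ S) (y ∈ S) → (o' x y ↔ ¬ o x y))
    (hkeep : ∀ x y, G.Adj x y → ¬ Xor' (x ∈ S) (y ∈ S) → (o' x y ↔ o x y))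
    (l : ℕ) (hl : Even l) (f : Fin l → V) (hf : IsCycleMap G l f) :
    cycleSign o f = cycleSign o' f := by
  classical
  obtain ⟨_, hadj⟩ := hf
  unfold cycleSign
  apply neg_one_pow_eq_of_cast_eq
  -- express the cardinalities as sums over `Fin l` in `ZMod 2`
  have card_eq : ∀ p : Fin l → Prop,
      ((Finset.univ.filter p).card : ZMod 2)
        = ∑ i : Fin l, (if p i then (1 : ZMod 2) else 0) := by
    intro p
    rw [Finset.card_filter]
    push_cast
    rfl
  rw [card_eq, card_eq]
  have key : ∀ i : Fin l,
      (if o' (f i) (f (cyclicSucc i)) then (1 : ZMod 2) else 0)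
        = (if o (f i) (f (cyclicSucc i)) then (1 : ZMod 2) else 0)
          + (if (f i ∈ S) then (1 : ZMod 2) else 0)
          + (if (f (cyclicSucc i) ∈ S) then (1 : ZMod 2) else 0) := by
    intro i
    have htwo : (1 : ZMod 2) + 1 + 1 = 1 := by decide
    have htwo' : (0 : ZMod 2) = 1 + 1 := by decide
    by_cases h1 : f i ∈ S <;> by_cases h2 : f (cyclicSucc i) ∈ S
    · have hfl := hkeep _ _ (hadj i) (by simp [Xor', h1, h2])
      by_cases ho2 : o (f i) (f (cyclicSucc i)) <;>
        simp only [hfl, h1, h2, ho2, if_true, if_false, if_pos, if_neg,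
          not_true, not_false_iff] <;> decide
    · have hfl := hflip _ _ (hadj i) (by simp [Xor', h1, h2])
      by_cases ho2 : o (f i) (f (cyclicSucc i)) <;>
        simp only [hfl, h1, h2, ho2, if_true, if_false, if_pos, if_neg,
          not_true, not_false_iff] <;> decide
    · have hfl := hflip _ _ (hadj i) (by simp [Xor', h1, h2])
      by_cases ho2 : o (f i) (f (cyclicSucc i)) <;>
        simp only [hfl, h1, h2, ho2, if_true, if_false, if_pos, if_neg,
          not_true, not_false_iff] <;> decide
    · have hfl := hkeep _ _ (hadj i) (by simp [Xor', h1, h2])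
      by_cases ho2 : o (f i) (f (cyclicSucc i)) <;>
        simp only [hfl, h1, h2, ho2, if_true, if_false, if_pos, if_neg,
          not_true, not_false_iff] <;> decide
  calc (∑ i : Fin l, if o (f i) (f (cyclicSucc i)) then (1 : ZMod 2) else 0)
      = ∑ i : Fin l, ((if o (f i) (f (cyclicSucc i)) then (1 : ZMod 2) else 0)
          + (if (f i ∈ S) then (1 : ZMod 2) else 0)
          + (if (f (cyclicSucc i) ∈ S) then (1 : ZMod 2) else 0)) := by
        rw [Finset.sum_add_distrib, Finset.sum_add_distrib]
        have hbij : Function.Bijective (cyclicSucc (m := l)) :=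
          Finite.injective_iff_bijective.mp cyclicSucc_injective
        have hre : (∑ i : Fin l, if (f (cyclicSucc i) ∈ S) then (1 : ZMod 2) else 0)
            = ∑ i : Fin l, if (f i ∈ S) then (1 : ZMod 2) else 0 :=
          Fintype.sum_bijective _ hbij _ _ (fun i => rfl)
        rw [hre]
        have : (∑ i : Fin l, if (f i ∈ S) then (1 : ZMod 2) else 0)
            + (∑ i : Fin l, if (f i ∈ S) then (1 : ZMod 2) else 0) = 0 := by
          rw [← two_mul, (by decide : (2 : ZMod 2) = 0), zero_mul]
        rw [add_assoc, this, add_zero]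
    _ = ∑ i : Fin l, (if o' (f i) (f (cyclicSucc i)) then (1 : ZMod 2) else 0) := by
        exact Finset.sum_congr rfl (fun i _ => (key i).symm)
end

section
/- Let Γ be a finite simple graph whose vertex set is partitioned as V = U ⊔ W, and suppose there exist subsets u ⊆ U and w ⊆ W such that the set of edges of Γ joining a vertex of U to a vertex of W is exactly { xy : x ∈ u, y ∈ w } (a complete bipartite connection between u and w). Let o be an orientation of Γ directing every such crossing edge from its endpoint in U to its endpoint in W, and let o′ be the orientation obtained from o by reversing the direction of every edge with both endpoints in W (all other edges unchanged). Then for every k ≥ 2, the sum of the signs of all 2k-cycles of Γ with respect to o equals the sum of the signs of all 2k-cycles of Γ with respect to o′. -/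
open Finset
open scoped Classical

/-! ### Auxiliary development for `signedCycleSum_eq_of_share_reflection` -/

namespace SRX

open Fin.NatCast Fin.CommRing

lemma cyclicSucc_eq {m : ℕ} [NeZero m] (a : Fin m) : cyclicSucc a = a + 1 := by
  apply Fin.ext
  simp only [cyclicSucc, Fin.add_def, Fin.val_one']
  rw [Nat.add_mod a.val 1 m, Nat.add_mod a.val (1 % m) m, Nat.mod_mod_of_dvd _ dvd_rfl]

noncomputable def fwd {m : ℕ} [NeZero m] (p : Fin m → Prop) (i : Fin m) : ℕ :=
  if h : ∃ t : ℕ, 0 < t ∧ p (i + (t : Fin m)) then Nat.find h else 0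

noncomputable def bwd {m : ℕ} [NeZero m] (p : Fin m → Prop) (i : Fin m) : ℕ :=
  if h : ∃ t : ℕ, 0 < t ∧ p (i - (t : Fin m)) then Nat.find h else 0

noncomputable def sig {m : ℕ} [NeZero m] (p : Fin m → Prop) (i : Fin m) : Fin m :=
  if p i then i else i - ((bwd p i : ℕ) : Fin m) + ((fwd p i : ℕ) : Fin m)

variable {m : ℕ} [NeZero m] {p : Fin m → Prop}

lemma fwd_ex (hp : ∃ j, p j) (i : Fin m) : ∃ t : ℕ, 0 < t ∧ p (i + (t : Fin m)) := by
  obtain ⟨j, hj⟩ := hp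
  refine ⟨(j - i).val + m, by have := NeZero.pos m; omega, ?_⟩
  have h1 : ((((j - i).val + m : ℕ)) : Fin m) = j - i := by
    push_cast [Fin.cast_val_eq_self, Fin.natCast_self]
    ring
  rw [h1]
  have h2 : i + (j - i) = j := by ring
  rwa [h2]

lemma bwd_ex (hp : ∃ j, p j) (i : Fin m) : ∃ t : ℕ, 0 < t ∧ p (i - (t : Fin m)) := by
  obtain ⟨j, hj⟩ := hp
  refine ⟨(i - j).val + m, by have := NeZero.pos m; omega, ?_⟩
  have h1 : ((((i - j).val + m : ℕ)) : Fin m) = i - j := by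
    push_cast [Fin.cast_val_eq_self, Fin.natCast_self]
    ring
  rw [h1]
  have h2 : i - (i - j) = j := by ring
  rwa [h2]

lemma fwd_spec (hp : ∃ j, p j) (i : Fin m) :
    0 < fwd p i ∧ p (i + (fwd p i : Fin m)) ∧
      ∀ t : ℕ, 0 < t → t < fwd p i → ¬ p (i + (t : Fin m)) := by
  have h := fwd_ex hp i
  simp only [fwd, dif_pos h]
  obtain ⟨h1, h2⟩ := Nat.find_spec h
  exact ⟨h1, h2, fun t ht htl hpt => Nat.find_min h htl ⟨ht, hpt⟩⟩

lemma bwd_spec (hp : ∃ j, p j) (i : Fin m) :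
    0 < bwd p i ∧ p (i - (bwd p i : Fin m)) ∧
      ∀ t : ℕ, 0 < t → t < bwd p i → ¬ p (i - (t : Fin m)) := by
  have h := bwd_ex hp i
  simp only [bwd, dif_pos h]
  obtain ⟨h1, h2⟩ := Nat.find_spec h
  exact ⟨h1, h2, fun t ht htl hpt => Nat.find_min h htl ⟨ht, hpt⟩⟩

lemma fwd_eq (hp : ∃ j, p j) {i : Fin m} {n : ℕ} (hn : 0 < n) (hPn : p (i + (n : Fin m)))
    (hmin : ∀ s : ℕ, 0 < s → s < n → ¬ p (i + (s : Fin m))) : fwd p i = n := by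
  have hex := fwd_ex hp i
  simp only [fwd, dif_pos hex]
  rw [Nat.find_eq_iff]
  exact ⟨⟨hn, hPn⟩, fun s hs hc => hmin s hc.1 hs hc.2⟩

lemma bwd_eq (hp : ∃ j, p j) {i : Fin m} {n : ℕ} (hn : 0 < n) (hPn : p (i - (n : Fin m)))
    (hmin : ∀ s : ℕ, 0 < s → s < n → ¬ p (i - (s : Fin m))) : bwd p i = n := by
  have hex := bwd_ex hp i
  simp only [bwd, dif_pos hex]
  rw [Nat.find_eq_iff]
  exact ⟨⟨hn, hPn⟩, fun s hs hc => hmin s hc.1 hs hc.2⟩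

lemma run_notP (hp : ∃ j, p j) {i : Fin m} (hi : ¬ p i) {t : ℕ} (h1 : 1 ≤ t)
    (h2 : t ≤ bwd p i + fwd p i - 1) :
    ¬ p (i - (bwd p i : Fin m) + (t : Fin m)) := by
  obtain ⟨cpos, cP, cmin⟩ := bwd_spec hp i
  obtain ⟨dpos, dP, dmin⟩ := fwd_spec hp i
  rcases le_or_gt t (bwd p i) with h | h
  · have e : i - (bwd p i : Fin m) + (t : Fin m) = i - ((bwd p i - t : ℕ) : Fin m) := by
      rw [Nat.cast_sub h]; ring
    rw [e]
    rcases Nat.eq_zero_or_pos (bwd p i - t) with h0 | h0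
    · rw [h0]; simpa using hi
    · exact cmin _ h0 (by omega)
  · have e : i - (bwd p i : Fin m) + (t : Fin m) = i + ((t - bwd p i : ℕ) : Fin m) := by
      rw [Nat.cast_sub h.le]; ring
    rw [e]
    exact dmin _ (by omega) (by omega)

lemma run_fwd (hp : ∃ j, p j) {i : Fin m} (hi : ¬ p i) {t : ℕ} (h1 : 1 ≤ t)
    (h2 : t ≤ bwd p i + fwd p i - 1) :
    fwd p (i - (bwd p i : Fin m) + (t : Fin m)) = bwd p i + fwd p i - t := by
  obtain ⟨cpos, cP, cmin⟩ := bwd_spec hp i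
  obtain ⟨dpos, dP, dmin⟩ := fwd_spec hp i
  refine fwd_eq hp (by omega) ?_ ?_
  · have e : i - (bwd p i : Fin m) + (t : Fin m) + ((bwd p i + fwd p i - t : ℕ) : Fin m)
        = i + (fwd p i : Fin m) := by
      rw [Nat.cast_sub (by omega)]; push_cast; ring
    rw [e]; exact dP
  · intro s hs0 hs
    have e : i - (bwd p i : Fin m) + (t : Fin m) + (s : Fin m)
        = i - (bwd p i : Fin m) + ((t + s : ℕ) : Fin m) := by push_cast; ring
    rw [e]
    exact run_notP hp hi (t := t + s) (by omega) (by omega)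

lemma run_bwd (hp : ∃ j, p j) {i : Fin m} (hi : ¬ p i) {t : ℕ} (h1 : 1 ≤ t)
    (h2 : t ≤ bwd p i + fwd p i - 1) :
    bwd p (i - (bwd p i : Fin m) + (t : Fin m)) = t := by
  obtain ⟨cpos, cP, cmin⟩ := bwd_spec hp i
  refine bwd_eq hp (by omega) ?_ ?_
  · have e : i - (bwd p i : Fin m) + (t : Fin m) - (t : Fin m) = i - (bwd p i : Fin m) := by
      ring
    rw [e]; exact cP
  · intro s hs0 hs
    have e : i - (bwd p i : Fin m) + (t : Fin m) - (s : Fin m)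
        = i - (bwd p i : Fin m) + ((t - s : ℕ) : Fin m) := by
      rw [Nat.cast_sub hs.le]; ring
    rw [e]
    exact run_notP hp hi (t := t - s) (by omega) (by omega)

lemma sum_le (hp : ∃ j, p j) {i : Fin m} (hi : ¬ p i) : bwd p i + fwd p i ≤ m := by
  obtain ⟨cpos, cP, cmin⟩ := bwd_spec hp i
  obtain ⟨dpos, dP, dmin⟩ := fwd_spec hp i
  by_contra hlt
  push_neg at hlt
  obtain ⟨j, hj⟩ := hp
  set t := ((j - i).val) with ht
  have htm : t < m := (j - i).isLt
  have hjit : j = i + (t : Fin m) := by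
    rw [ht, Fin.cast_val_eq_self]; ring
  rcases Nat.eq_zero_or_pos t with h0 | h0
  · rw [h0] at hjit
    simp at hjit
    rw [hjit] at hj; exact hi hj
  rcases lt_or_ge t (fwd p i) with h | h
  · exact dmin t h0 h (hjit ▸ hj)
  · have e : i + (t : Fin m) = i - ((m - t : ℕ) : Fin m) := by
      rw [Nat.cast_sub htm.le, Fin.natCast_self]; ring
    rw [e] at hjit
    exact cmin _ (by omega) (by omega) (hjit ▸ hj)

lemma sig_of_p {i : Fin m} (h : p i) : sig p i = i := if_pos h

lemma sig_eq {i : Fin m} (h : ¬ p i) :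
    sig p i = i - ((bwd p i : ℕ) : Fin m) + ((fwd p i : ℕ) : Fin m) := if_neg h

lemma not_p_sig (hp : ∃ j, p j) {i : Fin m} (hi : ¬ p i) : ¬ p (sig p i) := by
  rw [sig_eq hi]
  have := (bwd_spec hp i).1
  have := (fwd_spec hp i).1
  exact run_notP hp hi (by omega) (by omega)

lemma p_sig_iff (hp : ∃ j, p j) (i : Fin m) : p (sig p i) ↔ p i := by
  by_cases h : p i
  · rw [sig_of_p h]
  · exact iff_of_false (not_p_sig hp h) h

lemma sig_sig (hp : ∃ j, p j) {i : Fin m} (hi : ¬ p i) : sig p (sig p i) = i := by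
  have hj := not_p_sig hp hi
  have hc := (bwd_spec hp i).1
  have hd := (fwd_spec hp i).1
  rw [sig_eq hj]
  rw [sig_eq hi] at *
  have hb : bwd p (i - ((bwd p i : ℕ) : Fin m) + ((fwd p i : ℕ) : Fin m)) = fwd p i :=
    run_bwd hp hi (by omega) (by omega)
  have hf : fwd p (i - ((bwd p i : ℕ) : Fin m) + ((fwd p i : ℕ) : Fin m)) = bwd p i := by
    have := run_fwd hp hi (t := fwd p i) (by omega) (by omega)
    omega
  rw [hb, hf]
  ring

lemma sig_invol (hp : ∃ j, p j) : Function.Involutive (sig p) := by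
  intro i
  by_cases h : p i
  · rw [sig_of_p h, sig_of_p h]
  · exact sig_sig hp h

lemma sig_succ_WW (hp : ∃ j, p j) {i : Fin m} (hi : ¬ p i) (hi1 : ¬ p (i + 1)) :
    sig p (i + 1) = sig p i - 1 := by
  have hc := (bwd_spec hp i).1
  have hd2 : 2 ≤ fwd p i := by
    rcases Nat.lt_or_ge (fwd p i) 2 with h | h
    · have hd := (fwd_spec hp i).1
      have h1 : fwd p i = 1 := by omega
      have := (fwd_spec hp i).2.1
      rw [h1] at this
      simp only [Nat.cast_one] at this
      exact absurd this hi1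
    · exact h
  have e : i + 1 = i - ((bwd p i : ℕ) : Fin m) + ((bwd p i + 1 : ℕ) : Fin m) := by
    push_cast; ring
  have hb : bwd p (i + 1) = bwd p i + 1 := by
    rw [e]; exact run_bwd hp hi (by omega) (by omega)
  have hf : fwd p (i + 1) = fwd p i - 1 := by
    rw [e, run_fwd hp hi (by omega) (by omega)]; omega
  rw [sig_eq hi1, sig_eq hi, hb, hf, Nat.cast_sub (by omega)]
  push_cast
  ring

lemma bwd_succ_of_p (hp : ∃ j, p j) {i : Fin m} (hi : p i) : bwd p (i + 1) = 1 := by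
  refine bwd_eq hp one_pos ?_ (fun s hs0 hs1 => absurd hs1 (by omega))
  have e : i + 1 - ((1 : ℕ) : Fin m) = i := by push_cast; ring
  rwa [e]

lemma fwd_eq_one (hp : ∃ j, p j) {i : Fin m} (hi1 : p (i + 1)) : fwd p i = 1 := by
  refine fwd_eq hp one_pos ?_ (fun s hs0 hs1 => absurd hs1 (by omega))
  have e : i + ((1 : ℕ) : Fin m) = i + 1 := by push_cast; ring
  rwa [e]

lemma p_sig_sub_one (hp : ∃ j, p j) {i : Fin m} (hi : ¬ p i) (hi1 : p (i + 1)) :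
    p (sig p i - 1) := by
  have e : sig p i - 1 = i - ((bwd p i : ℕ) : Fin m) := by
    rw [sig_eq hi, fwd_eq_one hp hi1]
    push_cast; ring
  rw [e]
  exact (bwd_spec hp i).2.1

lemma p_sig_succ_add_one (hp : ∃ j, p j) {i : Fin m} (hi : p i) (hi1 : ¬ p (i + 1)) :
    p (sig p (i + 1) + 1) := by
  have e : sig p (i + 1) + 1 = (i + 1) + ((fwd p (i + 1) : ℕ) : Fin m) := by
    rw [sig_eq hi1, bwd_succ_of_p hp hi]
    push_cast; ring
  rw [e]
  exact (fwd_spec hp (i + 1)).2.1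

lemma sig_ne_exists (hp : ∃ j, p j) {i : Fin m} (hi : ¬ p i) (hi1 : ¬ p (i + 1)) :
    ∃ j : Fin m, ¬ p j ∧ sig p j ≠ j := by
  have hc := (bwd_spec hp i).1
  have hd2 : 2 ≤ fwd p i := by
    rcases Nat.lt_or_ge (fwd p i) 2 with h | h
    · have hd := (fwd_spec hp i).1
      have h1 : fwd p i = 1 := by omega
      have := (fwd_spec hp i).2.1
      rw [h1] at this
      simp only [Nat.cast_one] at this
      exact absurd this hi1
    · exact h
  have hsum := sum_le hp hi
  refine ⟨i - ((bwd p i : ℕ) : Fin m) + ((1 : ℕ) : Fin m), ?_, ?_⟩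
  · exact run_notP hp hi le_rfl (by omega)
  · have hb : bwd p (i - ((bwd p i : ℕ) : Fin m) + ((1 : ℕ) : Fin m)) = 1 :=
      run_bwd hp hi le_rfl (by omega)
    have hf : fwd p (i - ((bwd p i : ℕ) : Fin m) + ((1 : ℕ) : Fin m))
        = bwd p i + fwd p i - 1 :=
      run_fwd hp hi le_rfl (by omega)
    rw [sig_eq (run_notP hp hi le_rfl (by omega)), hb, hf]
    intro hcon
    have h2 : ((bwd p i + fwd p i - 1 : ℕ) : Fin m) = ((1 : ℕ) : Fin m) := by
      have h3 : i - ((bwd p i : ℕ) : Fin m) + ((1 : ℕ) : Fin m) - ((1 : ℕ) : Fin m)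
          + ((bwd p i + fwd p i - 1 : ℕ) : Fin m)
          = i - ((bwd p i : ℕ) : Fin m) + ((1 : ℕ) : Fin m) := hcon
      have h4 := congrArg (fun z => z - (i - ((bwd p i : ℕ) : Fin m))) h3
      simpa using h4
    have h5 : ((bwd p i + fwd p i - 1 : ℕ) : Fin m).val = ((1 : ℕ) : Fin m).val :=
      congrArg Fin.val h2
    rw [Fin.val_natCast, Fin.val_natCast] at h5
    rw [Nat.mod_eq_of_lt (by omega), Nat.mod_eq_of_lt (by have := NeZero.pos m; omega)] at h5
    omega

noncomputable def T {V : Type} {m : ℕ} [NeZero m] (U : Set V) (f : Fin m → V) : Fin m → V :=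
  fun i => f (sig (fun j => f j ∈ U) i)

lemma filter_irrel {α : Type*} (s : Finset α) (p q : α → Prop) (hpq : p = q)
    (h1 : DecidablePred p) (h2 : DecidablePred q) :
    @Finset.filter α p h1 s = @Finset.filter α q h2 s := by
  subst hpq
  congr 1

lemma filter_congr_irrel {α : Type*} (s : Finset α) (p q : α → Prop)
    (h1 : DecidablePred p) (h2 : DecidablePred q) (h : ∀ x, p x ↔ q x) :
    @Finset.filter α p h1 s = @Finset.filter α q h2 s :=
  filter_irrel s p q (funext fun x => propext (h x)) h1 h2

lemma pow_key {a b cw x : ℕ} (h : a + 2 * x = cw + b) :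
    ((-1 : ℤ)) ^ a = (-1) ^ cw * (-1) ^ b := by
  have h1 : ((-1 : ℤ)) ^ a * ((-1) ^ 2) ^ x = (-1) ^ cw * (-1) ^ b := by
    rw [← pow_mul, ← pow_add, h, pow_add]
  simpa using h1

lemma count_key (q r1 r2 : Fin m → Prop)
    (hsame : ∀ i, ¬ q i → (r2 i ↔ r1 i))
    (hflip : (univ.filter (fun i => r2 i ∧ q i)).card
      = (univ.filter (fun i => q i ∧ ¬ r1 i)).card) :
    ((-1 : ℤ)) ^ (univ.filter r2).card
      = (-1) ^ (univ.filter q).card * (-1) ^ (univ.filter r1).card := by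
  have s1 : (univ.filter (fun i => r2 i ∧ q i)).card
      + (univ.filter (fun i => r2 i ∧ ¬ q i)).card = (univ.filter r2).card := by
    rw [← Finset.filter_filter, ← Finset.filter_filter]
    exact Finset.card_filter_add_card_filter_not _
  have s2 : (univ.filter (fun i => r1 i ∧ q i)).card
      + (univ.filter (fun i => r1 i ∧ ¬ q i)).card = (univ.filter r1).card := by
    rw [← Finset.filter_filter, ← Finset.filter_filter]
    exact Finset.card_filter_add_card_filter_not _
  have s3 : (univ.filter (fun i => q i ∧ r1 i)).card
      + (univ.filter (fun i => q i ∧ ¬ r1 i)).card = (univ.filter q).card := by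
    rw [← Finset.filter_filter, ← Finset.filter_filter]
    exact Finset.card_filter_add_card_filter_not _
  have s4 : (univ.filter (fun i => r2 i ∧ ¬ q i)).card
      = (univ.filter (fun i => r1 i ∧ ¬ q i)).card := by
    congr 1
    refine Finset.filter_congr (fun i _ => ?_)
    constructor
    · rintro ⟨h2, hq⟩; exact ⟨(hsame i hq).mp h2, hq⟩
    · rintro ⟨h1, hq⟩; exact ⟨(hsame i hq).mpr h1, hq⟩
  have s5 : (univ.filter (fun i => r1 i ∧ q i)).card
      = (univ.filter (fun i => q i ∧ r1 i)).card := by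
    congr 1
    exact Finset.filter_congr (fun i _ => and_comm)
  exact pow_key (x := (univ.filter (fun i => q i ∧ r1 i)).card) (by omega)

section Graph

variable {V : Type} {G : SimpleGraph V} {U u w : Set V} {f : Fin m → V}

lemma T_cyc (hcross : ∀ x y, G.Adj x y → x ∈ U → y ∉ U → x ∈ u ∧ y ∈ w)
    (hcomplete : ∀ x ∈ u, ∀ y ∈ w, G.Adj x y)
    (hinj : Function.Injective f) (hadj : ∀ i, G.Adj (f i) (f (i + 1)))
    (hp : ∃ i, f i ∈ U) :
    Function.Injective (T U f) ∧ ∀ i, G.Adj (T U f i) (T U f (i + 1)) := by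
  set p : Fin m → Prop := fun j => f j ∈ U with hpdef
  constructor
  · exact hinj.comp (sig_invol hp).injective
  intro i
  show G.Adj (f (sig p i)) (f (sig p (i + 1)))
  by_cases h0 : p i <;> by_cases h1 : p (i + 1)
  · rw [sig_of_p h0, sig_of_p h1]; exact hadj i
  · rw [sig_of_p h0]
    have hu1 := hcross _ _ (hadj i) h0 h1
    have hj : ¬ p (sig p (i + 1)) := not_p_sig hp h1
    have hj1 : p (sig p (i + 1) + 1) := p_sig_succ_add_one hp h0 h1
    have hw2 := hcross _ _ ((hadj (sig p (i + 1)))).symm hj1 hj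
    exact hcomplete _ hu1.1 _ hw2.2
  · rw [sig_of_p h1]
    have h2 := hcross _ _ (hadj i).symm h1 h0
    have hj : ¬ p (sig p i) := not_p_sig hp h0
    have hj1 : p (sig p i - 1) := p_sig_sub_one hp h0 h1
    have hedge := hadj (sig p i - 1)
    have e2 : sig p i - 1 + 1 = sig p i := by ring
    rw [e2] at hedge
    have h3 := hcross _ _ hedge hj1 hj
    exact (hcomplete _ h2.1 _ h3.2).symm
  · have e := sig_succ_WW hp h0 h1
    rw [e]
    have hedge := hadj (sig p i - 1)
    have e2 : sig p i - 1 + 1 = sig p i := by ring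
    rw [e2] at hedge
    exact hedge.symm

lemma T_sign (hadj : ∀ i, G.Adj (f i) (f (i + 1)))
    (hTadj : ∀ i, G.Adj (T U f i) (T U f (i + 1)))
    (hp : ∃ i, f i ∈ U)
    (ρ : V → V → Prop) (hor : ∀ ⦃x y : V⦄, G.Adj x y → (ρ x y ↔ ¬ ρ y x))
    (hdir : ∀ x y, G.Adj x y → x ∈ U → y ∉ U → ρ x y) :
    ((-1 : ℤ)) ^ (univ.filter (fun i => ρ (T U f i) (T U f (i + 1)))).card
      = (-1) ^ (univ.filter (fun i => ¬ (f i ∈ U) ∧ ¬ (f (i + 1) ∈ U))).card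
        * (-1) ^ (univ.filter (fun i => ρ (f i) (f (i + 1)))).card := by
  set p : Fin m → Prop := fun j => f j ∈ U with hpdef
  have hTmem : ∀ i, (T U f i ∈ U) ↔ p i := fun i => p_sig_iff hp i
  have key := count_key (fun i => ¬ p i ∧ ¬ p (i + 1))
    (fun i => ρ (f i) (f (i + 1))) (fun i => ρ (T U f i) (T U f (i + 1))) ?_ ?_
  · convert key using 4
    exact filter_irrel _ _ _ rfl _ _
  · intro i hq
    by_cases h0 : p i <;> by_cases h1 : p (i + 1)
    · show ρ (f (sig p i)) (f (sig p (i + 1))) ↔ _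
      rw [sig_of_p h0, sig_of_p h1]
    · constructor
      · intro _; exact hdir _ _ (hadj i) h0 h1
      · intro _
        exact hdir _ _ (hTadj i) ((hTmem i).mpr h0)
          (fun hc => (not_p_sig hp h1) hc)
    · have hF : ¬ ρ (f i) (f (i + 1)) := by
        rw [hor (hadj i)]
        intro hc
        exact hc (hdir _ _ (hadj i).symm h1 h0)
      have hT : ¬ ρ (T U f i) (T U f (i + 1)) := by
        rw [hor (hTadj i)]
        intro hc
        exact hc (hdir _ _ (hTadj i).symm ((hTmem (i + 1)).mpr h1)
          (fun hc2 => (not_p_sig hp h0) hc2))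
      exact iff_of_false hT hF
    · exact absurd ⟨h0, h1⟩ hq
  · refine Finset.card_bij' (fun a _ => sig p (a + 1)) (fun b _ => sig p (b + 1))
      ?_ ?_ ?_ ?_
    · intro a ha
      simp only [Finset.mem_filter, Finset.mem_univ, true_and] at ha ⊢
      obtain ⟨hT, h0, h1⟩ := ha
      have e : sig p (a + 1) = sig p a - 1 := sig_succ_WW hp h0 h1
      have e1 : sig p (a + 1) + 1 = sig p a := by rw [e]; ring
      refine ⟨⟨not_p_sig hp h1, by rw [e1]; exact not_p_sig hp h0⟩, ?_⟩
      intro hc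
      have hT' : ρ (f (sig p a)) (f (sig p (a + 1))) := hT
      rw [e1] at hc
      have hedge := hadj (sig p (a + 1))
      rw [e1] at hedge
      exact ((hor hedge).mp hc) hT'
    · intro b hb
      simp only [Finset.mem_filter, Finset.mem_univ, true_and] at hb ⊢
      obtain ⟨⟨h0, h1⟩, hnr⟩ := hb
      have e : sig p (b + 1) = sig p b - 1 := sig_succ_WW hp h0 h1
      have e1 : sig p (b + 1) + 1 = sig p b := by rw [e]; ring
      have hq2 : ¬ p (sig p (b + 1)) := not_p_sig hp h1
      have hq3 : ¬ p (sig p (b + 1) + 1) := by rw [e1]; exact not_p_sig hp h0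
      refine ⟨?_, hq2, hq3⟩
      show ρ (f (sig p (sig p (b + 1)))) (f (sig p (sig p (b + 1) + 1)))
      have e2 : sig p (sig p (b + 1) + 1) = sig p (sig p b) := by rw [e1]
      have e3 : sig p (sig p b) = b := sig_sig hp h0
      have e4 : sig p (sig p (b + 1) + 1) = b := by rw [e2, e3]
      have h6 : sig p (sig p (b + 1) + 1) = sig p (sig p (b + 1)) - 1 :=
        sig_succ_WW hp hq2 hq3
      have e5 : sig p (sig p (b + 1)) = b + 1 := by
        have h7 : sig p (sig p (b + 1)) = sig p (sig p (b + 1) + 1) + 1 := by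
          rw [h6]; ring
        rw [h7, e4]
      rw [e5, e4]
      by_contra hc
      exact hnr ((hor (hadj b)).mpr hc)
    · intro a ha
      simp only [Finset.mem_filter, Finset.mem_univ, true_and] at ha
      obtain ⟨hT, h0, h1⟩ := ha
      have e : sig p (a + 1) = sig p a - 1 := sig_succ_WW hp h0 h1
      have e1 : sig p (a + 1) + 1 = sig p a := by rw [e]; ring
      show sig p (sig p (a + 1) + 1) = a
      rw [e1]
      exact sig_sig hp h0
    · intro b hb
      simp only [Finset.mem_filter, Finset.mem_univ, true_and] at hb
      obtain ⟨⟨h0, h1⟩, hnr⟩ := hb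
      have e : sig p (b + 1) = sig p b - 1 := sig_succ_WW hp h0 h1
      have e1 : sig p (b + 1) + 1 = sig p b := by rw [e]; ring
      show sig p (sig p (b + 1) + 1) = b
      rw [e1]
      exact sig_sig hp h0

lemma flip_sign (hadj : ∀ i, G.Adj (f i) (f (i + 1)))
    (o o' : V → V → Prop)
    (hflipW : ∀ x y, G.Adj x y → x ∉ U → y ∉ U → (o' x y ↔ ¬ o x y))
    (hkeep : ∀ x y, G.Adj x y → (x ∈ U ∨ y ∈ U) → (o' x y ↔ o x y)) :
    ((-1 : ℤ)) ^ (univ.filter (fun i => o' (f i) (f (i + 1)))).card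
      = (-1) ^ (univ.filter (fun i => ¬ (f i ∈ U) ∧ ¬ (f (i + 1) ∈ U))).card
        * (-1) ^ (univ.filter (fun i => o (f i) (f (i + 1)))).card := by
  have key := count_key (fun i => ¬ (f i ∈ U) ∧ ¬ (f (i + 1) ∈ U))
    (fun i => o (f i) (f (i + 1))) (fun i => o' (f i) (f (i + 1))) ?_ ?_
  · convert key using 4
    exact filter_irrel _ _ _ rfl _ _
  · intro i hq
    refine hkeep _ _ (hadj i) ?_
    by_contra hc
    push_neg at hc
    exact hq ⟨hc.1, hc.2⟩
  · refine congrArg Finset.card ?_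
    refine filter_congr_irrel _ _ _ _ _ (fun i => ?_)
    constructor
    · rintro ⟨h2, hq⟩
      exact ⟨hq, fun h1 => ((hflipW _ _ (hadj i) hq.1 hq.2).mp h2) h1⟩
    · rintro ⟨hq, h1⟩
      exact ⟨(hflipW _ _ (hadj i) hq.1 hq.2).mpr h1, hq⟩

lemma T_pattern {f : Fin m → V} (hp : ∃ i, f i ∈ U) :
    (fun i => T U f i ∈ U) = (fun i => f i ∈ U) :=
  funext fun i => propext (p_sig_iff hp i)

lemma T_T {f : Fin m → V} (hp : ∃ i, f i ∈ U) : T U (T U f) = f := by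
  funext i
  show (T U f) (sig (fun j => T U f j ∈ U) i) = f i
  rw [T_pattern hp]
  show f (sig (fun j => f j ∈ U) (sig (fun j => f j ∈ U) i)) = f i
  rw [sig_invol hp i]

lemma T_ne {f : Fin m → V} (hinj : Function.Injective f)
    (hp : ∃ i, f i ∈ U) {i : Fin m} (hi : ¬ f i ∈ U) (hi1 : ¬ f (i + 1) ∈ U) :
    T U f ≠ f := by
  obtain ⟨j, hj, hne⟩ := sig_ne_exists (p := fun k => f k ∈ U) hp hi hi1
  intro hcon
  exact hne (hinj (congrFun hcon j))

end Graph
end SRX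

theorem signedCycleSum_eq_of_share_reflection {V : Type} [Fintype V]
    (G : SimpleGraph V) (U : Set V) (u w : Set V)
    (hu : u ⊆ U) (hw : ∀ y ∈ w, y ∉ U)
    (hcross : ∀ x y, G.Adj x y → x ∈ U → y ∉ U → x ∈ u ∧ y ∈ w)
    (hcomplete : ∀ x ∈ u, ∀ y ∈ w, G.Adj x y)
    (o o' : V → V → Prop) (ho : IsOrientation G o) (ho' : IsOrientation G o')
    (hdir : ∀ x y, G.Adj x y → x ∈ U → y ∉ U → o x y)
    (hflipW : ∀ x y, G.Adj x y → x ∉ U → y ∉ U → (o' x y ↔ ¬ o x y))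
    (hkeep : ∀ x y, G.Adj x y → (x ∈ U ∨ y ∈ U) → (o' x y ↔ o x y))
    (k : ℕ) (hk : 2 ≤ k) :
    signedCycleSum G o (2 * k) = signedCycleSum G o' (2 * k) := by
  haveI : NeZero (2 * k) := ⟨by omega⟩
  have hdir' : ∀ x y, G.Adj x y → x ∈ U → y ∉ U → o' x y := fun x y hxy hx hy =>
    (hkeep x y hxy (Or.inl hx)).mpr (hdir x y hxy hx hy)
  unfold signedCycleSum
  congr 1
  simp only [IsCycleMap, cycleSign, SRX.cyclicSucc_eq]
  set S := univ.filter
    (fun f : Fin (2 * k) → V => Function.Injective f ∧ ∀ i, G.Adj (f i) (f (i + 1))) with hS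
  set E : (Fin (2 * k) → V) → Prop := fun f =>
    Even ((univ.filter (fun i => ¬ (f i ∈ U) ∧ ¬ (f (i + 1) ∈ U))).card) with hE
  rw [← Finset.sum_filter_add_sum_filter_not S E
      (fun f => ((-1 : ℤ)) ^ (univ.filter (fun i => o (f i) (f (i + 1)))).card),
    ← Finset.sum_filter_add_sum_filter_not S E
      (fun f => ((-1 : ℤ)) ^ (univ.filter (fun i => o' (f i) (f (i + 1)))).card)]
  have hfacts : ∀ f ∈ S.filter (fun f => ¬ E f),
      (Function.Injective f ∧ ∀ i, G.Adj (f i) (f (i + 1)))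
      ∧ (∃ i, f i ∈ U) ∧ (∃ i, ¬ (f i ∈ U) ∧ ¬ (f (i + 1) ∈ U)) := by
    intro f hf
    rw [Finset.mem_filter] at hf
    obtain ⟨hfS, hfE⟩ := hf
    rw [hS, Finset.mem_filter] at hfS
    refine ⟨hfS.2, ?_, ?_⟩
    · by_contra hall
      push_neg at hall
      refine hfE ?_
      show Even ((univ.filter
        (fun i : Fin (2 * k) => ¬ (f i ∈ U) ∧ ¬ (f (i + 1) ∈ U))).card)
      have he : (univ.filter
          (fun i : Fin (2 * k) => ¬ (f i ∈ U) ∧ ¬ (f (i + 1) ∈ U))) = univ :=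
        Finset.filter_true_of_mem (fun i _ => ⟨hall i, hall (i + 1)⟩)
      rw [he, Finset.card_univ, Fintype.card_fin]
      exact ⟨k, by ring⟩
    · have hne : (univ.filter
          (fun i : Fin (2 * k) => ¬ (f i ∈ U) ∧ ¬ (f (i + 1) ∈ U))).Nonempty := by
        rw [← Finset.card_pos]
        rcases Nat.eq_zero_or_pos (univ.filter
          (fun i : Fin (2 * k) => ¬ (f i ∈ U) ∧ ¬ (f (i + 1) ∈ U))).card with h0 | h0
        · refine absurd ?_ hfE
          show Even ((univ.filter
            (fun i : Fin (2 * k) => ¬ (f i ∈ U) ∧ ¬ (f (i + 1) ∈ U))).card)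
          rw [h0]
          exact Even.zero
        · exact h0
      obtain ⟨i, hi⟩ := hne
      rw [Finset.mem_filter] at hi
      exact ⟨i, hi.2⟩
  have hzero : ∀ (ρ : V → V → Prop), IsOrientation G ρ →
      (∀ x y, G.Adj x y → x ∈ U → y ∉ U → ρ x y) →
      ∑ f ∈ S.filter (fun f => ¬ E f),
        ((-1 : ℤ)) ^ (univ.filter (fun i => ρ (f i) (f (i + 1)))).card = 0 := by
    intro ρ hor hd
    refine Finset.sum_involution (fun f _ => SRX.T U f) ?_ ?_ ?_ ?_
    · intro f hf
      obtain ⟨⟨hinj, hadj⟩, hp, hWW⟩ := hfacts f hf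
      have hfE : ¬ E f := (Finset.mem_filter.mp hf).2
      have hTadj := (SRX.T_cyc hcross hcomplete hinj hadj hp).2
      rw [SRX.T_sign hadj hTadj hp ρ hor hd]
      have hodd : Odd ((univ.filter
          (fun i => ¬ (f i ∈ U) ∧ ¬ (f (i + 1) ∈ U))).card) :=
        Nat.not_even_iff_odd.mp hfE
      rw [Odd.neg_one_pow hodd]
      ring
    · intro f hf _
      obtain ⟨⟨hinj, hadj⟩, hp, i, hWW⟩ := hfacts f hf
      exact SRX.T_ne hinj hp hWW.1 hWW.2
    · intro f hf
      obtain ⟨⟨hinj, hadj⟩, hp, hWW⟩ := hfacts f hf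
      have hfE : ¬ E f := (Finset.mem_filter.mp hf).2
      have hT := SRX.T_cyc hcross hcomplete hinj hadj hp
      show SRX.T U f ∈ Finset.filter (fun f => ¬ E f) S
      rw [Finset.mem_filter]
      refine ⟨?_, ?_⟩
      · rw [hS, Finset.mem_filter]
        exact ⟨Finset.mem_univ _, hT.1, hT.2⟩
      · have hset : (univ.filter
            (fun i => ¬ (SRX.T U f i ∈ U) ∧ ¬ (SRX.T U f (i + 1) ∈ U)))
            = (univ.filter (fun i => ¬ (f i ∈ U) ∧ ¬ (f (i + 1) ∈ U))) :=
          SRX.filter_congr_irrel _ _ _ _ _ (fun i =>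
            and_congr (not_congr (SRX.p_sig_iff hp i))
              (not_congr (SRX.p_sig_iff hp (i + 1))))
        intro hc
        refine hfE ?_
        show Even ((univ.filter (fun i => ¬ (f i ∈ U) ∧ ¬ (f (i + 1) ∈ U))).card)
        rw [← hset]
        exact hc
    · intro f hf
      obtain ⟨⟨hinj, hadj⟩, hp, hWW⟩ := hfacts f hf
      exact SRX.T_T hp
  rw [hzero o ho hdir, hzero o' ho' hdir', add_zero, add_zero]
  refine Finset.sum_congr rfl ?_
  intro f hf
  have hfS := (Finset.mem_filter.mp hf).1
  have hfE : E f := (Finset.mem_filter.mp hf).2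
  rw [hS, Finset.mem_filter] at hfS
  obtain ⟨-, hinj, hadj⟩ := hfS
  rw [SRX.flip_sign hadj o o' hflipW hkeep]
  have heven : Even ((univ.filter (fun i => ¬ (f i ∈ U) ∧ ¬ (f (i + 1) ∈ U))).card) := hfE
  rw [Even.neg_one_pow heven, one_mul]
end

section
/- For every finite simple graph Γ and every pair of distinct vertices A, B, the determinant over the field ZMod 2 of the adjacency matrix of Γ̃_AB equals the determinant over ZMod 2 of the adjacency matrix of Γ. In particular, w_C(Γ̃_AB) = w_C(Γ), i.e., the invariant w_C satisfies the 2-term relation for graphs. -/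
open Finset
open scoped Classical

lemma tildeAdj {V : Type} (G : SimpleGraph V) (A B x y : V) :
    (tildeGraph G A B).Adj x y ↔ x ≠ y ∧
      (G.Adj x y ↔ ¬((x = A ∧ y ≠ B ∧ G.Adj y B) ∨ (y = A ∧ x ≠ B ∧ G.Adj x B))) :=
  Iff.rfl

theorem adjMatrix_det_tildeGraph_eq {V : Type} [Fintype V] (G : SimpleGraph V)
    (A B : V) (hAB : A ≠ B) :
    ((tildeGraph G A B).adjMatrix (ZMod 2)).det = (G.adjMatrix (ZMod 2)).det ∧
      wC (tildeGraph G A B) = wC G := by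
  classical
  set M := G.adjMatrix (ZMod 2) with hM
  have key : (tildeGraph G A B).adjMatrix (ZMod 2) =
      Matrix.transvection A B (1 : ZMod 2) * M * Matrix.transvection B A 1 := by
    ext x y
    rcases eq_or_ne y A with hy | hy
    · rw [hy]
      rcases eq_or_ne x A with hx | hx
      · rw [show x = A from hx]
        rw [Matrix.mul_transvection_apply_same, Matrix.transvection_mul_apply_same,
          Matrix.transvection_mul_apply_same]
        simp only [hM, SimpleGraph.adjMatrix_apply]
        have h1 : ¬ (tildeGraph G A B).Adj A A := (tildeGraph G A B).loopless.irrefl A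
        have hc := G.adj_comm A B
        rw [if_neg h1, if_neg (G.loopless.irrefl A), if_neg (G.loopless.irrefl B)]
        by_cases h4 : G.Adj B A <;> by_cases h5 : G.Adj A B <;>
          simp_all <;> decide
      · rw [Matrix.mul_transvection_apply_same,
          Matrix.transvection_mul_apply_of_ne A B x A hx 1 M,
          Matrix.transvection_mul_apply_of_ne A B x B hx 1 M]
        simp only [hM, SimpleGraph.adjMatrix_apply]
        rcases eq_or_ne x B with hxB | hxB
        · rw [show x = B from hxB]
          have hc := G.adj_comm B A
          by_cases h1 : G.Adj B A <;>
            simp_all [tildeAdj, hAB, Ne.symm hAB, G.loopless.irrefl B] <;> decide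
        · by_cases h1 : G.Adj x A <;> by_cases h2 : G.Adj x B <;>
            simp_all [tildeAdj, hx, hxB, hAB, Ne.symm hAB] <;> decide
    · rw [Matrix.mul_transvection_apply_of_ne B A x y hy 1 (Matrix.transvection A B 1 * M)]
      rcases eq_or_ne x A with hx | hx
      · rw [show x = A from hx]
        rw [Matrix.transvection_mul_apply_same]
        simp only [hM, SimpleGraph.adjMatrix_apply]
        rcases eq_or_ne y B with hyB | hyB
        · rw [show y = B from hyB]
          by_cases h1 : G.Adj A B <;>
            simp_all [tildeAdj, hAB, Ne.symm hAB, G.loopless.irrefl B] <;> decide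
        · have hne : A ≠ y := Ne.symm hy
          by_cases h1 : G.Adj A y <;> by_cases h2 : G.Adj y B <;>
            simp_all [tildeAdj, hne, hyB, hAB, Ne.symm hAB, G.adj_comm y B] <;> decide
      · rw [Matrix.transvection_mul_apply_of_ne A B x y hx 1 M]
        simp only [hM, SimpleGraph.adjMatrix_apply]
        by_cases h : G.Adj x y <;>
          simp_all [tildeAdj, hx, hy, fun h' : G.Adj x y => h'.ne]
  have hdet : ((tildeGraph G A B).adjMatrix (ZMod 2)).det = M.det := by
    rw [key, Matrix.det_mul, Matrix.det_mul,
      Matrix.det_transvection_of_ne _ _ hAB, Matrix.det_transvection_of_ne _ _ (Ne.symm hAB)]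
    ring
  exact ⟨hdet, by unfold wC; rw [hdet]⟩
end
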